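/- arXiv:2404.05456 — 7 statements merged into one kernel-verified Lean document; each statement's English description precedes it below -/
import Mathlib

section
/- Let d ≥ 1 be an integer and p > 1. Let V, W : ℝ^d → ℝ be positive functions of class C^{1,1}_loc, bounded below by a positive constant, such that x ↦ V(x)^{-d} and y ↦ W(y)^{-d} are probability densities on ℝ^d. Assume that V^{1/p} is globally Lipschitz, that liminf_{|y|→∞} W(y)/|y|^p > 0, and that liminf_{|y|→∞} (∇W(y)·y)/W(y) > 1. Let φ : ℝ^d → ℝ be a convex function of class C¹ such that the pushforward of the measure V(x)^{-d} dx under ∇φ equals the measure W(y)^{-d} dy. Then there exists a constant C > 0 such that |∇φ(x)| ≤ C(1 + |x|) for all x ∈ ℝ^d. -/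
open MeasureTheory Filter
open scoped RealInnerProductSpace ENNReal NNReal

private lemma lgmt_alg1 (ε R p : ℝ) (d : ℕ) (hε : 0 < ε) (hR : 0 < R) (k : ℕ) :
    (ε * ((2:ℝ)^k * R) ^ p) ^ (-(d:ℝ)) * ((2:ℝ)^(k+1) * R) ^ (d:ℝ)
      = (ε ^ (-(d:ℝ)) * 2 ^ (d:ℝ)) * R ^ (-((p-1)*d)) * ((2:ℝ) ^ (-((p-1)*d))) ^ k := by
  have h2k : (0:ℝ) < (2:ℝ)^k := by positivity
  have e1 : (2:ℝ)^k = (2:ℝ)^((k:ℕ):ℝ) := (Real.rpow_natCast 2 k).symm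
  have e2 : (2:ℝ)^(k+1) = (2:ℝ)^(((k:ℕ):ℝ)+1) := by
    rw [← Real.rpow_natCast 2 (k+1)]; push_cast; ring_nf
  have e3 : ((2:ℝ) ^ (-((p-1)*d))) ^ k = (2:ℝ) ^ ((-((p-1)*d)) * k) := by
    rw [← Real.rpow_natCast ((2:ℝ) ^ (-((p-1)*d))) k, ← Real.rpow_mul (by norm_num)]
  rw [e1, e2, e3,
    Real.mul_rpow hε.le (by positivity),
    Real.mul_rpow (by positivity) hR.le,
    Real.mul_rpow (by positivity) hR.le,
    Real.mul_rpow (by positivity) (by positivity),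
    ← Real.rpow_mul (by norm_num : (0:ℝ) ≤ 2),
    ← Real.rpow_mul hR.le,
    ← Real.rpow_mul (by norm_num : (0:ℝ) ≤ 2), ← Real.rpow_mul (by norm_num : (0:ℝ) ≤ 2)]
  rw [show ε ^ (-(d:ℝ)) * ((2:ℝ) ^ ((k:ℝ) * p * -(d:ℝ)) * R ^ (p * -(d:ℝ))) * ((2:ℝ) ^ (((k:ℝ) + 1) * (d:ℝ)) * R ^ (d:ℝ))
      = ε ^ (-(d:ℝ)) * ((2:ℝ) ^ ((k:ℝ) * p * -(d:ℝ)) * (2:ℝ) ^ (((k:ℝ) + 1) * (d:ℝ))) * (R ^ (p * -(d:ℝ)) * R ^ (d:ℝ)) by ring,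
    ← Real.rpow_add (by norm_num : (0:ℝ) < 2), ← Real.rpow_add hR,
    show (k:ℝ) * p * -(d:ℝ) + ((k:ℝ) + 1) * (d:ℝ) = -((p-1)*(d:ℝ)) * (k:ℝ) + (d:ℝ) by ring,
    show p * -(d:ℝ) + (d:ℝ) = -((p-1)*(d:ℝ)) by ring,
    Real.rpow_add (by norm_num : (0:ℝ) < 2)]
  ring

private lemma lgmt_alg2 (K₁ r p : ℝ) (d : ℕ) (hK : 0 < K₁) (hr : 0 < r) :
    (K₁ * r ^ p) ^ (-(d:ℝ)) * (r/8) ^ (d:ℝ)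
      = (K₁ ^ (-(d:ℝ)) * (8:ℝ) ^ (-(d:ℝ))) * r ^ (-((p-1)*(d:ℝ))) := by
  rw [Real.mul_rpow hK.le (by positivity),
    Real.div_rpow hr.le (by norm_num : (0:ℝ) ≤ 8),
    ← Real.rpow_mul hr.le,
    Real.rpow_neg (by norm_num : (0:ℝ) ≤ 8),
    div_eq_mul_inv]
  rw [show K₁ ^ (-(d:ℝ)) * r ^ (p * -(d:ℝ)) * (r ^ (d:ℝ) * ((8:ℝ) ^ (d:ℝ))⁻¹)
      = K₁ ^ (-(d:ℝ)) * ((8:ℝ) ^ (d:ℝ))⁻¹ * (r ^ (p * -(d:ℝ)) * r ^ (d:ℝ)) by ring,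
    ← Real.rpow_add hr, show p * -(d:ℝ) + (d:ℝ) = -((p-1)*(d:ℝ)) by ring]

private lemma lgmt_tail_bound (d : ℕ) (hd : 1 ≤ d) (p : ℝ) (hp : 1 < p)
    (W : EuclideanSpace ℝ (Fin d) → ℝ)
    (ε R₀ : ℝ) (hε : 0 < ε) (hR₀ : 1 ≤ R₀)
    (hW : ∀ y : EuclideanSpace ℝ (Fin d), R₀ ≤ ‖y‖ → ε * ‖y‖ ^ p ≤ W y) :
    ∃ Cν > 0, ∀ R, R₀ ≤ R →
      (volume.withDensity fun y => ENNReal.ofReal (W y ^ (-(d : ℝ)))) {y | R ≤ ‖y‖}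
        ≤ ENNReal.ofReal (Cν * R ^ (-((p-1)*(d:ℝ)))) := by
  haveI : Nontrivial (EuclideanSpace ℝ (Fin d)) := by
    apply Module.nontrivial_of_finrank_pos (R := ℝ)
    rw [finrank_euclideanSpace_fin]; omega
  set q : ℝ := (p-1)*(d:ℝ) with hqdef
  have hdpos : (0:ℝ) < d := by exact_mod_cast Nat.lt_of_lt_of_le Nat.zero_lt_one hd
  have hq : 0 < q := by
    apply mul_pos (by linarith) hdpos
  set s : ℝ := (2:ℝ) ^ (-q) with hsdef
  have hs0 : 0 < s := Real.rpow_pos_of_pos (by norm_num) _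
  have hs1 : s < 1 := Real.rpow_lt_one_of_one_lt_of_neg (by norm_num) (by linarith)
  set ω : ℝ≥0∞ := volume (Metric.ball (0 : EuclideanSpace ℝ (Fin d)) 1) with hωdef
  have hωlt : ω < ⊤ := measure_ball_lt_top
  set D : ℝ := ε ^ (-(d:ℝ)) * 2 ^ (d:ℝ) with hDdef
  have hD : 0 < D := mul_pos (Real.rpow_pos_of_pos hε _) (Real.rpow_pos_of_pos (by norm_num) _)
  set J : ℝ≥0∞ := ENNReal.ofReal D * ω * (1 - ENNReal.ofReal s)⁻¹ with hJdef
  have hJtop : J ≠ ⊤ := by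
    apply ENNReal.mul_ne_top (ENNReal.mul_ne_top ENNReal.ofReal_ne_top hωlt.ne)
    rw [ENNReal.inv_ne_top]
    intro h
    rw [tsub_eq_zero_iff_le] at h
    have := ENNReal.one_le_ofReal.mp h
    linarith
  refine ⟨J.toReal + 1, by positivity, ?_⟩
  intro R hR
  have hRpos : 0 < R := by linarith
  set A : ℕ → Set (EuclideanSpace ℝ (Fin d)) :=
    fun k => (fun y => ‖y‖) ⁻¹' (Set.Icc ((2:ℝ)^k * R) ((2:ℝ)^(k+1) * R)) with hAdef
  have hAmeas : ∀ k, MeasurableSet (A k) := fun k =>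
    measurable_norm measurableSet_Icc
  have hcover : {y : EuclideanSpace ℝ (Fin d) | R ≤ ‖y‖} ⊆ ⋃ k, A k := by
    intro y hy
    simp only [Set.mem_setOf_eq] at hy
    have hex : ∃ k : ℕ, ‖y‖ < (2:ℝ)^k * R := by
      obtain ⟨n, hn⟩ := pow_unbounded_of_one_lt (‖y‖ / R) (one_lt_two)
      exact ⟨n, by rwa [div_lt_iff₀ hRpos] at hn⟩
    have h0 : ¬ (‖y‖ < (2:ℝ)^0 * R) := by simp; linarith
    have hfind := Nat.find_spec hex
    have hfpos : 0 < Nat.find hex := by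
      rcases Nat.eq_zero_or_pos (Nat.find hex) with h | h
      · rw [h] at hfind; exact absurd hfind h0
      · exact h
    obtain ⟨k, hk⟩ : ∃ k, Nat.find hex = k + 1 := ⟨Nat.find hex - 1, by omega⟩
    have hlow : ¬ (‖y‖ < (2:ℝ)^k * R) := Nat.find_min hex (by omega)
    refine Set.mem_iUnion.mpr ⟨k, ?_⟩
    simp only [hAdef, Set.mem_preimage, Set.mem_Icc]
    constructor
    · linarith [not_lt.mp hlow]
    · rw [hk] at hfind; linarith
  have hcalc : ∀ k : ℕ,
      (volume.withDensity fun y => ENNReal.ofReal (W y ^ (-(d : ℝ)))) (A k)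
        ≤ (ENNReal.ofReal (D * R ^ (-q)) * ω) * (ENNReal.ofReal s) ^ k := by
    intro k
    have h2k1 : (1:ℝ) ≤ (2:ℝ)^k := one_le_pow₀ (by norm_num)
    have h2kR : 0 < (2:ℝ)^k * R := by positivity
    have hconst : ∀ y ∈ A k, ENNReal.ofReal (W y ^ (-(d:ℝ)))
        ≤ ENNReal.ofReal ((ε * ((2:ℝ)^k * R) ^ p) ^ (-(d:ℝ))) := by
      intro y hy
      simp only [hAdef, Set.mem_preimage, Set.mem_Icc] at hy
      have hyR₀ : R₀ ≤ ‖y‖ := le_trans (by nlinarith) hy.1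
      have h1 : ε * ((2:ℝ)^k * R) ^ p ≤ W y := by
        refine le_trans ?_ (hW y hyR₀)
        have : ((2:ℝ)^k * R) ^ p ≤ ‖y‖ ^ p :=
          Real.rpow_le_rpow h2kR.le hy.1 (by linarith)
        nlinarith
      apply ENNReal.ofReal_le_ofReal
      exact Real.rpow_le_rpow_of_nonpos (by positivity) h1 (by linarith)
    calc (volume.withDensity fun y => ENNReal.ofReal (W y ^ (-(d : ℝ)))) (A k)
        = ∫⁻ y in A k, ENNReal.ofReal (W y ^ (-(d : ℝ))) := by
          rw [withDensity_apply _ (hAmeas k)]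
      _ ≤ ∫⁻ _ in A k, ENNReal.ofReal ((ε * ((2:ℝ)^k * R) ^ p) ^ (-(d:ℝ))) :=
          setLIntegral_mono' (hAmeas k) hconst
      _ = ENNReal.ofReal ((ε * ((2:ℝ)^k * R) ^ p) ^ (-(d:ℝ))) * volume (A k) :=
          setLIntegral_const _ _
      _ ≤ ENNReal.ofReal ((ε * ((2:ℝ)^k * R) ^ p) ^ (-(d:ℝ)))
            * volume (Metric.closedBall (0 : EuclideanSpace ℝ (Fin d)) ((2:ℝ)^(k+1) * R)) := by
          gcongr
          intro y hy
          simp only [hAdef, Set.mem_preimage, Set.mem_Icc] at hy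
          simpa [Metric.mem_closedBall, dist_zero_right] using hy.2
      _ = ENNReal.ofReal ((ε * ((2:ℝ)^k * R) ^ p) ^ (-(d:ℝ)))
            * (ENNReal.ofReal (((2:ℝ)^(k+1) * R) ^ (d:ℝ)) * ω) := by
          rw [Measure.addHaar_closedBall _ _ (by positivity)]
          rw [finrank_euclideanSpace_fin]
          rw [← Real.rpow_natCast ((2:ℝ)^(k+1) * R) d]
      _ = ENNReal.ofReal ((ε * ((2:ℝ)^k * R) ^ p) ^ (-(d:ℝ)) * ((2:ℝ)^(k+1) * R) ^ (d:ℝ)) * ω := by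
          rw [← mul_assoc, ← ENNReal.ofReal_mul (by positivity)]
      _ = ENNReal.ofReal (D * R ^ (-q) * s ^ k) * ω := by
          rw [lgmt_alg1 ε R p d hε hRpos k]
      _ = (ENNReal.ofReal (D * R ^ (-q)) * ω) * (ENNReal.ofReal s) ^ k := by
          rw [ENNReal.ofReal_mul (by positivity), ENNReal.ofReal_pow hs0.le]
          ring
  calc (volume.withDensity fun y => ENNReal.ofReal (W y ^ (-(d : ℝ)))) {y | R ≤ ‖y‖}
      ≤ (volume.withDensity fun y => ENNReal.ofReal (W y ^ (-(d : ℝ)))) (⋃ k, A k) :=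
        measure_mono hcover
    _ ≤ ∑' k, (volume.withDensity fun y => ENNReal.ofReal (W y ^ (-(d : ℝ)))) (A k) :=
        measure_iUnion_le _
    _ ≤ ∑' k, (ENNReal.ofReal (D * R ^ (-q)) * ω) * (ENNReal.ofReal s) ^ k :=
        ENNReal.tsum_le_tsum hcalc
    _ = (ENNReal.ofReal (D * R ^ (-q)) * ω) * (1 - ENNReal.ofReal s)⁻¹ := by
        rw [ENNReal.tsum_mul_left, ENNReal.tsum_geometric]
    _ = ENNReal.ofReal (R ^ (-q)) * J := by
        rw [hJdef, ENNReal.ofReal_mul hD.le]; ring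
    _ ≤ ENNReal.ofReal (R ^ (-q)) * ENNReal.ofReal (J.toReal + 1) := by
        have hJle : J ≤ ENNReal.ofReal (J.toReal + 1) := by
          conv_lhs => rw [← ENNReal.ofReal_toReal hJtop]
          exact ENNReal.ofReal_le_ofReal (by linarith)
        exact mul_le_mul_right hJle _
    _ = ENNReal.ofReal ((J.toReal + 1) * R ^ (-q)) := by
        rw [ENNReal.ofReal_mul (by positivity)]; ring

set_option maxHeartbeats 2000000 in
/-- Theorem 1.1: linear growth of the monotone transport map between
`1/d`-concave densities. -/
theorem linear_growth_of_monotone_transport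
    (d : ℕ) (hd : 1 ≤ d) (p : ℝ) (hp : 1 < p)
    (V W : EuclideanSpace ℝ (Fin d) → ℝ)
    (hVpos : ∀ x, 0 < V x) (hWpos : ∀ y, 0 < W y)
    (cV cW : ℝ) (hcV : 0 < cV) (hcW : 0 < cW)
    (hVlb : ∀ x, cV ≤ V x) (hWlb : ∀ y, cW ≤ W y)
    (hV1 : ContDiff ℝ 1 V) (hW1 : ContDiff ℝ 1 W)
    (hVlip : LocallyLipschitz (fun x => gradient V x))
    (hWlip : LocallyLipschitz (fun y => gradient W y))
    (hVprob : ∫ x, V x ^ (-(d : ℝ)) = 1)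
    (hWprob : ∫ y, W y ^ (-(d : ℝ)) = 1)
    (LV : ℝ≥0) (hVpow : LipschitzWith LV (fun x => V x ^ (1 / p)))
    (hWgrowth : 0 < liminf (fun y => W y / ‖y‖ ^ p)
      (cocompact (EuclideanSpace ℝ (Fin d))))
    (hWrad : 1 < liminf (fun y => ⟪gradient W y, y⟫ / W y)
      (cocompact (EuclideanSpace ℝ (Fin d))))
    (φ : EuclideanSpace ℝ (Fin d) → ℝ)
    (hφconv : ConvexOn ℝ Set.univ φ) (hφ1 : ContDiff ℝ 1 φ)
    (hpush : Measure.map (fun x => gradient φ x)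
        (volume.withDensity fun x => ENNReal.ofReal (V x ^ (-(d : ℝ))))
      = volume.withDensity fun y => ENNReal.ofReal (W y ^ (-(d : ℝ)))) :
    ∃ C > 0, ∀ x, ‖gradient φ x‖ ≤ C * (1 + ‖x‖) := by
  haveI : Nontrivial (EuclideanSpace ℝ (Fin d)) := by
    apply Module.nontrivial_of_finrank_pos (R := ℝ)
    rw [finrank_euclideanSpace_fin]; omega
  set q : ℝ := (p-1)*(d:ℝ) with hqdef
  have hdpos : (0:ℝ) < d := by exact_mod_cast Nat.lt_of_lt_of_le Nat.zero_lt_one hd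
  have hq : 0 < q := mul_pos (by linarith) hdpos
  -- monotonicity of the gradient of a convex function
  have hmono : ∀ x z : (EuclideanSpace ℝ (Fin d)), ⟪gradient φ x, z - x⟫ ≤ ⟪gradient φ z, z - x⟫ := by
    intro x z
    set v := z - x with hv
    set g : ℝ → ℝ := fun t => φ (t • v + x) with hgdef
    have hdiff := hφ1.differentiable one_ne_zero
    have hg : ∀ t : ℝ, HasDerivAt g (fderiv ℝ φ (t • v + x) v) t := by
      intro t
      have h1 : HasFDerivAt φ (fderiv ℝ φ (t • v + x)) (t • v + x) :=
        (hdiff _).hasFDerivAt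
      have h2 : HasDerivAt (fun t : ℝ => t • v + x) v t := by
        simpa using ((hasDerivAt_id t).smul_const v).add_const x
      exact h1.comp_hasDerivAt t h2
    have hgconv : ConvexOn ℝ Set.univ g := by
      have := hφconv.comp_affineMap (AffineMap.lineMap x z)
      simpa [Function.comp_def, AffineMap.lineMap_apply, hv, hgdef] using this
    have hmono' := hgconv.monotoneOn_deriv (fun t _ => (hg t).differentiableAt)
    have h01 := hmono' (Set.mem_univ (0:ℝ)) (Set.mem_univ (1:ℝ)) zero_le_one
    rw [(hg 0).deriv, (hg 1).deriv] at h01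
    have e0 : (0:ℝ) • v + x = x := by simp
    have e1 : (1:ℝ) • v + x = z := by simp [hv]
    rw [e0, e1] at h01
    have key : ∀ w, fderiv ℝ φ w v = ⟪gradient φ w, v⟫ := by
      intro w; simp [gradient, real_inner_comm]
    rw [key x, key z] at h01
    exact h01
  -- continuity of the gradient
  have hgradcont : Continuous (fun x : (EuclideanSpace ℝ (Fin d)) => gradient φ x) := by
    have : (fun x : (EuclideanSpace ℝ (Fin d)) => gradient φ x)
        = fun x => (InnerProductSpace.toDual ℝ (EuclideanSpace ℝ (Fin d))).symm (fderiv ℝ φ x) := rfl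
    rw [this]
    exact (InnerProductSpace.toDual ℝ (EuclideanSpace ℝ (Fin d))).symm.continuous.comp
      (hφ1.continuous_fderiv one_ne_zero)
  -- quantitative growth of W
  obtain ⟨ε, hεpos, R₀, hR₀, hWg⟩ : ∃ ε > 0, ∃ R₀ : ℝ, 1 ≤ R₀ ∧ ∀ y : (EuclideanSpace ℝ (Fin d)),
      R₀ ≤ ‖y‖ → ε * ‖y‖ ^ p ≤ W y := by
    rw [liminf_eq] at hWgrowth
    have hne : {a : ℝ | ∀ᶠ y in cocompact (EuclideanSpace ℝ (Fin d)), a ≤ W y / ‖y‖ ^ p}.Nonempty := by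
      by_contra h
      rw [Set.not_nonempty_iff_eq_empty] at h
      rw [h, Real.sSup_empty] at hWgrowth
      exact lt_irrefl _ hWgrowth
    obtain ⟨ε, hεmem, hεpos⟩ := exists_lt_of_lt_csSup hne hWgrowth
    have hεmem2 : {y : (EuclideanSpace ℝ (Fin d)) | ε ≤ W y / ‖y‖ ^ p} ∈ cocompact (EuclideanSpace ℝ (Fin d)) := hεmem
    rw [mem_cocompact] at hεmem2
    obtain ⟨K, hK, hKsub⟩ := hεmem2
    obtain ⟨R, hR⟩ := hK.isBounded.subset_closedBall 0
    refine ⟨ε, hεpos, max R 0 + 1, by nlinarith [le_max_right R (0:ℝ)], ?_⟩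
    intro y hy
    have hyK : y ∉ K := by
      intro hyK
      have := hR hyK
      simp only [Metric.mem_closedBall, dist_zero_right] at this
      nlinarith [le_max_left R (0:ℝ), le_max_right R (0:ℝ)]
    have h2 : ε ≤ W y / ‖y‖ ^ p := hKsub hyK
    have hyp : (0:ℝ) < ‖y‖ ^ p := by
      apply Real.rpow_pos_of_pos; nlinarith [le_max_right R (0:ℝ)]
    calc ε * ‖y‖ ^ p ≤ (W y / ‖y‖ ^ p) * ‖y‖ ^ p :=
          mul_le_mul_of_nonneg_right h2 hyp.le
      _ = W y := by field_simp
  -- tail bound for the target measure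
  obtain ⟨Cν, hCνpos, htail⟩ := lgmt_tail_bound d hd p hp W ε R₀ hεpos hR₀ hWg
  -- constants controlling V from above
  set a : ℝ := V 0 ^ (1/p) with hadef
  have hapos : 0 < a := Real.rpow_pos_of_pos (hVpos 0) _
  set K₁ : ℝ := (a + 2*(LV:ℝ)) ^ p with hK₁def
  have hK₁pos : 0 < K₁ := Real.rpow_pos_of_pos (by positivity) _
  set ω : ℝ≥0∞ := volume (Metric.ball (0:(EuclideanSpace ℝ (Fin d))) 1) with hωdef
  have hωpos : 0 < ω := Metric.measure_ball_pos _ _ one_pos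
  have hωlt : ω < ⊤ := measure_ball_lt_top
  set w : ℝ := ω.toReal with hwdef
  have hwpos : 0 < w := ENNReal.toReal_pos hωpos.ne' hωlt.ne
  set c₅ : ℝ := K₁ ^ (-(d:ℝ)) * (8:ℝ) ^ (-(d:ℝ)) * w with hc₅def
  have hc₅pos : 0 < c₅ := by
    apply mul_pos (mul_pos (Real.rpow_pos_of_pos hK₁pos _)
      (Real.rpow_pos_of_pos (by norm_num) _)) hwpos
  set C₂ : ℝ := 2 * (Cν / c₅) ^ (1/q) with hC₂def
  have hC₂nonneg : 0 ≤ C₂ := by positivity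
  -- the final constant
  refine ⟨max (2*R₀) C₂, lt_of_lt_of_le (by linarith) (le_max_left _ _), ?_⟩
  intro x
  set M : ℝ := ‖gradient φ x‖ with hMdef
  have hr1 : (1:ℝ) ≤ 1 + ‖x‖ := by linarith [norm_nonneg x]
  by_cases hMcase : M ≤ 2*R₀
  · calc M ≤ 2*R₀ := hMcase
      _ = 2*R₀ * 1 := (mul_one _).symm
      _ ≤ max (2*R₀) C₂ * (1 + ‖x‖) := by
          apply mul_le_mul (le_max_left _ _) hr1 zero_le_one
          linarith [le_max_left (2*R₀) C₂]
  · push_neg at hMcase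
    have hMpos : 0 < M := by linarith
    set r : ℝ := 1 + ‖x‖ with hrdef
    have hrpos : 0 < r := by linarith
    set e : (EuclideanSpace ℝ (Fin d)) := M⁻¹ • gradient φ x with hedef
    have he : ‖e‖ = 1 := by
      rw [hedef, norm_smul, norm_inv, Real.norm_eq_abs, abs_of_pos hMpos, ← hMdef]
      field_simp
    set z₀ : (EuclideanSpace ℝ (Fin d)) := x + (3*r/4) • e with hz₀def
    set B : Set (EuclideanSpace ℝ (Fin d)) := Metric.ball z₀ (r/8) with hBdef
    -- decomposition of z - x for z ∈ B
    have hdecomp : ∀ z : (EuclideanSpace ℝ (Fin d)), z - x = (z - z₀) + (3*r/4) • e := by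
      intro z; rw [hz₀def]; abel
    -- (a) the gradient is large on B
    have hbig : ∀ z ∈ B, M/2 ≤ ‖gradient φ z‖ := by
      intro z hz
      have hzz₀ : ‖z - z₀‖ < r/8 := by rwa [Metric.mem_ball, dist_eq_norm] at hz
      have hinner_e : 5*r/8 ≤ ⟪e, z - x⟫ := by
        have h2 : ⟪e, z - x⟫ = ⟪e, z - z₀⟫ + (3*r/4) := by
          rw [hdecomp z, inner_add_right, real_inner_smul_right,
            real_inner_self_eq_norm_mul_norm, he]
          ring
        have h3 : |⟪e, z - z₀⟫| ≤ ‖e‖ * ‖z - z₀‖ := abs_real_inner_le_norm e _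
        rw [he, one_mul] at h3
        have := abs_le.mp h3
        linarith [this.1]
      have hgx : ⟪gradient φ x, z - x⟫ = M * ⟪e, z - x⟫ := by
        have hsm : gradient φ x = M • e := by
          rw [hedef, smul_smul, mul_inv_cancel₀ hMpos.ne', one_smul]
        rw [hsm, real_inner_smul_left]
      have h4 : M * (5*r/8) ≤ ⟪gradient φ z, z - x⟫ := by
        refine le_trans ?_ (hmono x z)
        rw [hgx]
        exact mul_le_mul_of_nonneg_left hinner_e hMpos.le
      have h5 : ⟪gradient φ z, z - x⟫ ≤ ‖gradient φ z‖ * ‖z - x‖ :=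
        real_inner_le_norm _ _
      have h6 : ‖z - x‖ ≤ 7*r/8 := by
        calc ‖z - x‖ ≤ ‖z - z₀‖ + ‖(3*r/4) • e‖ := by
              rw [hdecomp z]; exact norm_add_le _ _
          _ ≤ r/8 + 3*r/4 := by
              rw [norm_smul, he, mul_one, Real.norm_eq_abs,
                abs_of_pos (by linarith : (0:ℝ) < 3*r/4)]
              linarith
          _ ≤ 7*r/8 := by linarith
      have h7 : M * (5*r/8) ≤ ‖gradient φ z‖ * (7*r/8) :=
        le_trans h4 (le_trans h5 (mul_le_mul_of_nonneg_left h6 (norm_nonneg _)))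
      have h8 : M * (5/8) * r ≤ ‖gradient φ z‖ * (7/8) * r := by linear_combination h7
      have h9 : M * (5/8) ≤ ‖gradient φ z‖ * (7/8) := le_of_mul_le_mul_right h8 hrpos
      linarith
    -- (b) upper bound for V on B
    have hVb : ∀ z ∈ B, ENNReal.ofReal ((K₁ * r ^ p) ^ (-(d:ℝ)))
        ≤ ENNReal.ofReal (V z ^ (-(d:ℝ))) := by
      intro z hz
      have hzz₀ : ‖z - z₀‖ < r/8 := by rwa [Metric.mem_ball, dist_eq_norm] at hz
      have hzx : ‖z - x‖ ≤ r := by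
        calc ‖z - x‖ ≤ ‖z - z₀‖ + ‖(3*r/4) • e‖ := by
              rw [hdecomp z]; exact norm_add_le _ _
          _ ≤ r/8 + 3*r/4 := by
              rw [norm_smul, he, mul_one, Real.norm_eq_abs,
                abs_of_pos (by linarith : (0:ℝ) < 3*r/4)]
              linarith
          _ ≤ r := by linarith
      have hlip1 : V z ^ (1/p) - V x ^ (1/p) ≤ (LV:ℝ) * r := by
        have h0 := hVpow.dist_le_mul z x
        rw [Real.dist_eq, dist_eq_norm] at h0
        have h1 : V z ^ (1/p) - V x ^ (1/p) ≤ (LV:ℝ) * ‖z - x‖ := by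
          simpa using (abs_le.mp h0).2
        have h2 : (LV:ℝ) * ‖z - x‖ ≤ (LV:ℝ) * r :=
          mul_le_mul_of_nonneg_left hzx (LV.coe_nonneg)
        exact h1.trans h2
      have hlip2 : V x ^ (1/p) - V 0 ^ (1/p) ≤ (LV:ℝ) * ‖x‖ := by
        have h0 := hVpow.dist_le_mul x 0
        rw [Real.dist_eq, dist_zero_right] at h0
        simpa using (abs_le.mp h0).2
      have hbound : V z ^ (1/p) ≤ (a + 2*(LV:ℝ)) * r := by
        have hx_le_r : ‖x‖ ≤ r := by rw [hrdef]; linarith [norm_nonneg x]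
        have hLVx : (LV:ℝ) * ‖x‖ ≤ (LV:ℝ) * r :=
          mul_le_mul_of_nonneg_left hx_le_r (LV.coe_nonneg)
        have har : a ≤ a * r := le_mul_of_one_le_right hapos.le (by linarith)
        have hav : a = V 0 ^ (1/p) := hadef
        nlinarith [LV.coe_nonneg]
      have hVzle : V z ≤ K₁ * r ^ p := by
        have h1 : (V z ^ (1/p)) ^ p ≤ ((a + 2*(LV:ℝ)) * r) ^ p :=
          Real.rpow_le_rpow (Real.rpow_nonneg (hVpos z).le _) hbound (by linarith)
        rw [← Real.rpow_mul (hVpos z).le, one_div_mul_cancel (by linarith : p ≠ 0),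
          Real.rpow_one] at h1
        rw [Real.mul_rpow (by positivity) hrpos.le] at h1
        exact h1
      apply ENNReal.ofReal_le_ofReal
      exact Real.rpow_le_rpow_of_nonpos (hVpos z) hVzle (by linarith)
    -- (c) lower bound for the source measure of B
    have hVmeas : Measurable (fun z : (EuclideanSpace ℝ (Fin d)) => ENNReal.ofReal (V z ^ (-(d:ℝ)))) := by
      have hc : Continuous fun z : (EuclideanSpace ℝ (Fin d)) => V z ^ (-(d:ℝ)) :=
        hV1.continuous.rpow_const (fun z => Or.inl (hVpos z).ne')
      exact (ENNReal.continuous_ofReal.comp hc).measurable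
    have hμB : ENNReal.ofReal (c₅ * r ^ (-q))
        ≤ (volume.withDensity fun z : (EuclideanSpace ℝ (Fin d)) => ENNReal.ofReal (V z ^ (-(d:ℝ)))) B := by
      calc ENNReal.ofReal (c₅ * r ^ (-q))
          = ENNReal.ofReal ((K₁ * r ^ p) ^ (-(d:ℝ)) * (r/8) ^ (d:ℝ) * w) := by
            congr 1
            rw [lgmt_alg2 K₁ r p d hK₁pos hrpos, hc₅def, hqdef]
            ring
        _ = ENNReal.ofReal ((K₁ * r ^ p) ^ (-(d:ℝ)))
              * (ENNReal.ofReal ((r/8) ^ (d:ℝ)) * ENNReal.ofReal w) := by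
            rw [← ENNReal.ofReal_mul (by positivity), ← ENNReal.ofReal_mul (by positivity),
              mul_assoc]
        _ = ENNReal.ofReal ((K₁ * r ^ p) ^ (-(d:ℝ))) * volume B := by
            rw [hBdef, Measure.addHaar_ball _ _ (by positivity : (0:ℝ) ≤ r/8),
              finrank_euclideanSpace_fin, ← Real.rpow_natCast (r/8) d,
              hwdef, ENNReal.ofReal_toReal hωlt.ne, hωdef]
        _ = ∫⁻ _ in B, ENNReal.ofReal ((K₁ * r ^ p) ^ (-(d:ℝ))) :=
            (setLIntegral_const _ _).symm
        _ ≤ ∫⁻ z in B, ENNReal.ofReal (V z ^ (-(d:ℝ))) :=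
            setLIntegral_mono hVmeas hVb
        _ = (volume.withDensity fun z : (EuclideanSpace ℝ (Fin d)) => ENNReal.ofReal (V z ^ (-(d:ℝ)))) B :=
            (withDensity_apply _ measurableSet_ball).symm
    -- (d) transport to the target measure
    have hTmeas : MeasurableSet {y : (EuclideanSpace ℝ (Fin d)) | M/2 ≤ ‖y‖} :=
      measurableSet_le measurable_const measurable_norm
    have hsub : B ⊆ (fun x : (EuclideanSpace ℝ (Fin d)) => gradient φ x) ⁻¹' {y : (EuclideanSpace ℝ (Fin d)) | M/2 ≤ ‖y‖} :=
      fun z hz => hbig z hz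
    have hchain : (volume.withDensity fun z : (EuclideanSpace ℝ (Fin d)) => ENNReal.ofReal (V z ^ (-(d:ℝ)))) B
        ≤ (volume.withDensity fun y : (EuclideanSpace ℝ (Fin d)) => ENNReal.ofReal (W y ^ (-(d:ℝ)))) {y | M/2 ≤ ‖y‖} := by
      calc (volume.withDensity fun z : (EuclideanSpace ℝ (Fin d)) => ENNReal.ofReal (V z ^ (-(d:ℝ)))) B
          ≤ (volume.withDensity fun z : (EuclideanSpace ℝ (Fin d)) => ENNReal.ofReal (V z ^ (-(d:ℝ))))
              ((fun x : (EuclideanSpace ℝ (Fin d)) => gradient φ x) ⁻¹' {y : (EuclideanSpace ℝ (Fin d)) | M/2 ≤ ‖y‖}) := measure_mono hsub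
        _ = (Measure.map (fun x : (EuclideanSpace ℝ (Fin d)) => gradient φ x)
              (volume.withDensity fun z : (EuclideanSpace ℝ (Fin d)) => ENNReal.ofReal (V z ^ (-(d:ℝ)))))
              {y : (EuclideanSpace ℝ (Fin d)) | M/2 ≤ ‖y‖} :=
            (Measure.map_apply hgradcont.measurable hTmeas).symm
        _ = (volume.withDensity fun y : (EuclideanSpace ℝ (Fin d)) => ENNReal.ofReal (W y ^ (-(d:ℝ))))
              {y | M/2 ≤ ‖y‖} := by rw [hpush]
    -- (e) apply the tail bound at radius M/2
    have hM2R₀ : R₀ ≤ M/2 := by linarith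
    have hM2pos : 0 < M/2 := by linarith
    have hfinal := le_trans hμB (le_trans hchain (htail (M/2) hM2R₀))
    -- (f) conclude the real inequality
    have hreal : c₅ * r ^ (-q) ≤ Cν * (M/2) ^ (-q) :=
      (ENNReal.ofReal_le_ofReal_iff (by positivity)).mp hfinal
    have hrq : (0:ℝ) < r ^ q := Real.rpow_pos_of_pos hrpos _
    have hMq : (0:ℝ) < (M/2) ^ q := Real.rpow_pos_of_pos hM2pos _
    rw [Real.rpow_neg hrpos.le, Real.rpow_neg hM2pos.le] at hreal
    have hcross : c₅ * (M/2) ^ q ≤ Cν * r ^ q := by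
      have h := mul_le_mul_of_nonneg_right hreal
        (by positivity : (0:ℝ) ≤ r ^ q * (M/2) ^ q)
      calc c₅ * (M/2) ^ q = c₅ * (r ^ q)⁻¹ * (r ^ q * (M/2) ^ q) := by
            field_simp
        _ ≤ Cν * ((M/2) ^ q)⁻¹ * (r ^ q * (M/2) ^ q) := h
        _ = Cν * r ^ q := by field_simp
    have hdivq : (M/2) ^ q ≤ (Cν/c₅) * r ^ q := by
      rw [div_mul_eq_mul_div, le_div_iff₀ hc₅pos]
      linarith [hcross]
    have hM2le : M/2 ≤ (Cν/c₅) ^ (1/q) * r := by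
      have h1 : ((M/2) ^ q) ^ (1/q) ≤ ((Cν/c₅) * r ^ q) ^ (1/q) :=
        Real.rpow_le_rpow (by positivity) hdivq (by positivity)
      rw [← Real.rpow_mul hM2pos.le, mul_one_div_cancel hq.ne', Real.rpow_one] at h1
      rw [Real.mul_rpow (by positivity) (by positivity),
        ← Real.rpow_mul hrpos.le, mul_one_div_cancel hq.ne', Real.rpow_one] at h1
      exact h1
    calc M = 2 * (M/2) := by ring
      _ ≤ 2 * ((Cν/c₅) ^ (1/q) * r) := by linarith
      _ = C₂ * r := by rw [hC₂def]; ring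
      _ ≤ max (2*R₀) C₂ * (1 + ‖x‖) := by
          have : C₂ * r ≤ max (2*R₀) C₂ * r :=
            mul_le_mul_of_nonneg_right (le_max_right _ _) hrpos.le
          simpa [hrdef] using this
end

section
/- Let d ≥ 1 be an integer and let g be the standard Gaussian density on ℝ^d, g(y) = (2π)^{−d/2} e^{−|y|²/2}. Let V : ℝ^d → ℝ be a positive function of class C^{1,1}_loc, bounded below by a positive constant, such that V^{-d} is a probability density on ℝ^d, and assume there exists A > 0 with |∇V(x)|/V(x) ≤ A/(1+|x|) for all x ∈ ℝ^d. Let φ : ℝ^d → ℝ be a convex function of class C¹ such that the pushforward of V(x)^{-d} dx under ∇φ equals g(y) dy. Then there exists a constant C > 0 such that |∇φ(x)| ≤ C√(1 + log(1+|x|)) for all x ∈ ℝ^d. -/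
set_option maxHeartbeats 1000000


open MeasureTheory Filter
open scoped RealInnerProductSpace ENNReal NNReal

section Aux

variable {F : Type*} [NormedAddCommGroup F] [InnerProductSpace ℝ F] [CompleteSpace F]

lemma aux_hasDerivAt_line {f : F → ℝ} (hf : Differentiable ℝ f) (x v : F) (t : ℝ) :
    HasDerivAt (fun s : ℝ => f (x + s • v)) ⟪gradient f (x + t • v), v⟫ t := by
  have hline : HasDerivAt (fun s : ℝ => x + s • v) v t := by
    simpa using ((hasDerivAt_id t).smul_const v).const_add x
  have hF := ((hf (x + t • v)).hasGradientAt.hasFDerivAt)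
  have := hF.comp_hasDerivAt t hline
  rw [InnerProductSpace.toDual_apply_apply] at this
  exact this

lemma aux_convex_first_order {φ : F → ℝ} (hconv : ConvexOn ℝ Set.univ φ)
    (hdiff : Differentiable ℝ φ) (x z : F) :
    ⟪gradient φ x, z - x⟫ ≤ φ z - φ x ∧ φ z - φ x ≤ ⟪gradient φ z, z - x⟫ := by
  set g : ℝ → ℝ := fun t => φ (x + t • (z - x)) with hg
  have hgc : ConvexOn ℝ Set.univ g := by
    have := hconv.comp_affineMap (AffineMap.lineMap x z : ℝ →ᵃ[ℝ] F)
    have heq : g = φ ∘ (AffineMap.lineMap x z : ℝ →ᵃ[ℝ] F) := by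
      funext t
      simp only [g, Function.comp_apply, AffineMap.lineMap_apply, vsub_eq_sub,
        vadd_eq_add]
      rw [add_comm]
    rw [heq]
    simpa using this
  have hd : ∀ t : ℝ, HasDerivAt g ⟪gradient φ (x + t • (z - x)), z - x⟫ t :=
    fun t => aux_hasDerivAt_line hdiff x (z - x) t
  have h0 := (hgc.deriv_le_slope (Set.mem_univ (0:ℝ)) (Set.mem_univ (1:ℝ)) one_pos
    (hd 0).differentiableAt)
  have h1 := (hgc.slope_le_deriv (Set.mem_univ (0:ℝ)) (Set.mem_univ (1:ℝ)) one_pos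
    (hd 1).differentiableAt)
  have e0 : deriv g 0 = ⟪gradient φ x, z - x⟫ := by
    rw [(hd 0).deriv]; norm_num
  have e1 : deriv g 1 = ⟪gradient φ z, z - x⟫ := by
    rw [(hd 1).deriv]; norm_num
  have hslope : slope g 0 1 = φ z - φ x := by
    simp [slope, g]
  constructor
  · rw [← e0, ← hslope]; exact h0
  · rw [← e1, ← hslope]; exact h1

lemma aux_V_growth {V : F → ℝ} (hVpos : ∀ x, 0 < V x) (hV1 : ContDiff ℝ 1 V)
    {A : ℝ} (hV2 : ∀ x, ‖gradient V x‖ / V x ≤ A / (1 + ‖x‖)) (z : F) :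
    V z ≤ V 0 * (1 + ‖z‖) ^ A := by
  have hVd : Differentiable ℝ V := hV1.differentiable one_ne_zero
  set ψ : ℝ → ℝ := fun t => A * Real.log (1 + t * ‖z‖) - Real.log (V (t • z)) with hψdef
  set ψ' : ℝ → ℝ := fun t =>
    A * ‖z‖ / (1 + t * ‖z‖) - ⟪gradient V (t • z), z⟫ / V (t • z) with hψ'def
  have hder : ∀ t ∈ Set.Icc (0:ℝ) 1, HasDerivAt ψ (ψ' t) t := by
    intro t ht
    have hpos : (0:ℝ) < 1 + t * ‖z‖ := by nlinarith [ht.1, norm_nonneg z]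
    have h1 : HasDerivAt (fun s : ℝ => 1 + s * ‖z‖) ‖z‖ t := by
      simpa using ((hasDerivAt_id t).mul_const ‖z‖).const_add 1
    have h1l : HasDerivAt (fun s : ℝ => A * Real.log (1 + s * ‖z‖))
        (A * (‖z‖ / (1 + t * ‖z‖))) t := (h1.log hpos.ne').const_mul A
    have h2 : HasDerivAt (fun s : ℝ => V (s • z)) ⟪gradient V (t • z), z⟫ t := by
      simpa using aux_hasDerivAt_line hVd 0 z t
    have h2l : HasDerivAt (fun s : ℝ => Real.log (V (s • z)))
        (⟪gradient V (t • z), z⟫ / V (t • z)) t := h2.log (hVpos _).ne'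
    rw [show ψ' t = A * (‖z‖ / (1 + t * ‖z‖)) - ⟪gradient V (t • z), z⟫ / V (t • z) by
      simp only [ψ', mul_div_assoc]]
    exact h1l.sub h2l
  have hnonneg : ∀ t ∈ Set.Icc (0:ℝ) 1, 0 ≤ ψ' t := by
    intro t ht
    have ht0 : (0:ℝ) ≤ t := ht.1
    have hnormp : ‖t • z‖ = t * ‖z‖ := by
      rw [norm_smul, Real.norm_eq_abs, abs_of_nonneg ht0]
    have hVp := hVpos (t • z)
    have hip : ⟪gradient V (t • z), z⟫ / V (t • z) ≤ A * ‖z‖ / (1 + t * ‖z‖) := by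
      have h1 : ⟪gradient V (t • z), z⟫ ≤ ‖gradient V (t • z)‖ * ‖z‖ :=
        real_inner_le_norm _ _
      have h2 : ⟪gradient V (t • z), z⟫ / V (t • z)
          ≤ ‖gradient V (t • z)‖ * ‖z‖ / V (t • z) := by gcongr
      have h3 : ‖gradient V (t • z)‖ * ‖z‖ / V (t • z)
          = (‖gradient V (t • z)‖ / V (t • z)) * ‖z‖ := by ring
      have h4 := hV2 (t • z)
      rw [hnormp] at h4
      calc ⟪gradient V (t • z), z⟫ / V (t • z)
          ≤ (‖gradient V (t • z)‖ / V (t • z)) * ‖z‖ := by rw [← h3]; exact h2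
        _ ≤ (A / (1 + t * ‖z‖)) * ‖z‖ :=
            mul_le_mul_of_nonneg_right h4 (norm_nonneg z)
        _ = A * ‖z‖ / (1 + t * ‖z‖) := by ring
    simpa [ψ'] using sub_nonneg.mpr hip
  have hmono : MonotoneOn ψ (Set.Icc (0:ℝ) 1) := by
    apply monotoneOn_of_hasDerivWithinAt_nonneg (convex_Icc 0 1)
      (fun t ht => (hder t ht).continuousAt.continuousWithinAt)
      (fun t ht => ((hder t (interior_subset ht)).hasDerivWithinAt))
      (fun t ht => hnonneg t (interior_subset ht))
  have h01 : ψ 0 ≤ ψ 1 := hmono (by norm_num) (by norm_num) zero_le_one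
  have hψ0 : ψ 0 = - Real.log (V 0) := by simp [ψ]
  have hψ1 : ψ 1 = A * Real.log (1 + ‖z‖) - Real.log (V z) := by simp [ψ]
  have hlog : Real.log (V z) ≤ Real.log (V 0) + A * Real.log (1 + ‖z‖) := by
    rw [hψ0, hψ1] at h01; linarith
  have h1z : (0:ℝ) < 1 + ‖z‖ := by positivity
  calc V z = Real.exp (Real.log (V z)) := (Real.exp_log (hVpos z)).symm
    _ ≤ Real.exp (Real.log (V 0) + A * Real.log (1 + ‖z‖)) := Real.exp_le_exp.mpr hlog
    _ = V 0 * (1 + ‖z‖) ^ A := by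
        rw [Real.exp_add, Real.exp_log (hVpos 0), Real.rpow_def_of_pos h1z, mul_comm A]

end Aux

/-- Theorem 2.2: logarithmic growth of the monotone transport map from a
polynomially decaying density to the standard Gaussian. -/
theorem log_growth_of_monotone_transport_to_gaussian
    (d : ℕ) (hd : 1 ≤ d)
    (V : EuclideanSpace ℝ (Fin d) → ℝ)
    (hVpos : ∀ x, 0 < V x)
    (cV : ℝ) (hcV : 0 < cV) (hVlb : ∀ x, cV ≤ V x)
    (hV1 : ContDiff ℝ 1 V)
    (hVlip : LocallyLipschitz (fun x => gradient V x))
    (hVprob : ∫ x, V x ^ (-(d : ℝ)) = 1)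
    (A : ℝ) (hA : 0 < A)
    (hV2 : ∀ x, ‖gradient V x‖ / V x ≤ A / (1 + ‖x‖))
    (φ : EuclideanSpace ℝ (Fin d) → ℝ)
    (hφconv : ConvexOn ℝ Set.univ φ) (hφ1 : ContDiff ℝ 1 φ)
    (hpush : Measure.map (fun x => gradient φ x)
        (volume.withDensity fun x => ENNReal.ofReal (V x ^ (-(d : ℝ))))
      = volume.withDensity fun y =>
          ENNReal.ofReal ((2 * Real.pi) ^ (-(d : ℝ) / 2) * Real.exp (-‖y‖ ^ 2 / 2))) :
    ∃ C > 0, ∀ x, ‖gradient φ x‖ ≤ C * Real.sqrt (1 + Real.log (1 + ‖x‖)) := by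
  classical
  have hφd : Differentiable ℝ φ := hφ1.differentiable one_ne_zero
  have hTcont : Continuous (fun x : EuclideanSpace ℝ (Fin d) => gradient φ x) := by
    have h1 : Continuous (fun x : EuclideanSpace ℝ (Fin d) => fderiv ℝ φ x) :=
      hφ1.continuous_fderiv one_ne_zero
    exact (InnerProductSpace.toDual ℝ (EuclideanSpace ℝ (Fin d))).symm.continuous.comp h1
  set μ := volume.withDensity
    (fun x : EuclideanSpace ℝ (Fin d) => ENNReal.ofReal (V x ^ (-(d:ℝ)))) with hμdef
  set gd : ℝ := (2 * Real.pi) ^ (-(d:ℝ) / 2) with hgddef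
  have hgdpos : 0 < gd := Real.rpow_pos_of_pos (by positivity) _
  set K : ℝ := gd * (Real.pi / (1/4)) ^ ((d:ℝ) / 2) with hKdef
  have hKpos : 0 < K := mul_pos hgdpos (Real.rpow_pos_of_pos (by positivity) _)
  -- Gaussian integrability and integral value
  have hint : Integrable
      (fun y : EuclideanSpace ℝ (Fin d) => gd * Real.exp (-(1/4) * ‖y‖^2)) := by
    have h0 : Integrable (fun v : EuclideanSpace ℝ (Fin d) =>
        Complex.exp (-(1/4 : ℂ) * (‖v‖:ℂ)^2
          + 0 * ((⟪(0:EuclideanSpace ℝ (Fin d)), v⟫ : ℝ) : ℂ))) :=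
      GaussianFourier.integrable_cexp_neg_mul_sq_norm_add (by norm_num) 0 0
    have h1 := h0.norm
    have heq : (fun v : EuclideanSpace ℝ (Fin d) =>
        ‖Complex.exp (-(1/4 : ℂ) * (‖v‖:ℂ)^2
          + 0 * ((⟪(0:EuclideanSpace ℝ (Fin d)), v⟫ : ℝ) : ℂ))‖)
        = fun v : EuclideanSpace ℝ (Fin d) => Real.exp (-(1/4) * ‖v‖^2) := by
      funext v
      have hz : (-(1/4 : ℂ) * (‖v‖:ℂ)^2
          + 0 * ((⟪(0:EuclideanSpace ℝ (Fin d)), v⟫ : ℝ) : ℂ))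
          = ((-(1/4) * ‖v‖^2 : ℝ) : ℂ) := by push_cast; ring
      rw [hz, Complex.norm_exp_ofReal]
    rw [heq] at h1
    exact h1.const_mul gd
  have hintval : ∫ y : EuclideanSpace ℝ (Fin d), gd * Real.exp (-(1/4) * ‖y‖^2) = K := by
    rw [integral_const_mul]
    rw [show (fun y : EuclideanSpace ℝ (Fin d) => Real.exp (-(1/4) * ‖y‖^2))
      = fun y : EuclideanSpace ℝ (Fin d) => Real.exp (-(1/4 : ℝ) * ‖y‖^2) from rfl]
    rw [GaussianFourier.integral_rexp_neg_mul_sq_norm (by norm_num : (0:ℝ) < 1/4)]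
    rw [hKdef]
    congr 2
    simp
  -- Gaussian tail bound
  have tail : ∀ r : ℝ, 0 ≤ r →
      (volume.withDensity fun y : EuclideanSpace ℝ (Fin d) =>
        ENNReal.ofReal (gd * Real.exp (-‖y‖^2 / 2))) {y : EuclideanSpace ℝ (Fin d) | r ≤ ‖y‖}
        ≤ ENNReal.ofReal (Real.exp (-r^2/4) * K) := by
    intro r hr0
    have hSmeas : MeasurableSet {y : EuclideanSpace ℝ (Fin d) | r ≤ ‖y‖} :=
      (isClosed_le continuous_const continuous_norm).measurableSet
    rw [withDensity_apply _ hSmeas]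
    have hgmeas : Measurable (fun y : EuclideanSpace ℝ (Fin d) =>
        ENNReal.ofReal (Real.exp (-r^2/4))
          * ENNReal.ofReal (gd * Real.exp (-(1/4) * ‖y‖^2))) := by
      apply Measurable.const_mul
      exact (Continuous.measurable (by continuity)).ennreal_ofReal
    have hpt : ∀ y ∈ {y : EuclideanSpace ℝ (Fin d) | r ≤ ‖y‖},
        ENNReal.ofReal (gd * Real.exp (-‖y‖^2 / 2))
          ≤ ENNReal.ofReal (Real.exp (-r^2/4))
            * ENNReal.ofReal (gd * Real.exp (-(1/4) * ‖y‖^2)) := by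
      intro y hy
      rw [← ENNReal.ofReal_mul (Real.exp_nonneg _)]
      apply ENNReal.ofReal_le_ofReal
      have hry : r ≤ ‖y‖ := hy
      have hsq : r^2 ≤ ‖y‖^2 := by nlinarith [norm_nonneg y]
      have h1 : Real.exp (-‖y‖^2 / 2) ≤ Real.exp (-r^2/4) * Real.exp (-(1/4)*‖y‖^2) := by
        rw [← Real.exp_add]
        apply Real.exp_le_exp.mpr
        nlinarith
      calc gd * Real.exp (-‖y‖^2 / 2)
          ≤ gd * (Real.exp (-r^2/4) * Real.exp (-(1/4)*‖y‖^2)) :=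
            mul_le_mul_of_nonneg_left h1 hgdpos.le
        _ = Real.exp (-r^2/4) * (gd * Real.exp (-(1/4)*‖y‖^2)) := by ring
    calc ∫⁻ y in {y : EuclideanSpace ℝ (Fin d) | r ≤ ‖y‖},
          ENNReal.ofReal (gd * Real.exp (-‖y‖^2 / 2))
        ≤ ∫⁻ y in {y : EuclideanSpace ℝ (Fin d) | r ≤ ‖y‖},
            ENNReal.ofReal (Real.exp (-r^2/4))
              * ENNReal.ofReal (gd * Real.exp (-(1/4) * ‖y‖^2)) :=
          setLIntegral_mono hgmeas hpt
      _ ≤ ∫⁻ y : EuclideanSpace ℝ (Fin d),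
            ENNReal.ofReal (Real.exp (-r^2/4))
              * ENNReal.ofReal (gd * Real.exp (-(1/4) * ‖y‖^2)) :=
          setLIntegral_le_lintegral _ _
      _ = ENNReal.ofReal (Real.exp (-r^2/4))
            * ∫⁻ y : EuclideanSpace ℝ (Fin d),
                ENNReal.ofReal (gd * Real.exp (-(1/4) * ‖y‖^2)) :=
          lintegral_const_mul' _ _ ENNReal.ofReal_ne_top
      _ = ENNReal.ofReal (Real.exp (-r^2/4)) * ENNReal.ofReal K := by
          rw [← ofReal_integral_eq_lintegral_ofReal hint
            (Eventually.of_forall fun y => by positivity), hintval]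
      _ = ENNReal.ofReal (Real.exp (-r^2/4) * K) :=
          (ENNReal.ofReal_mul (Real.exp_nonneg _)).symm
  -- ball measure
  set m : ℝ := (volume (Metric.closedBall (0 : EuclideanSpace ℝ (Fin d)) (1/4))).toReal
    with hmdef
  have hmball_fin : volume (Metric.closedBall (0 : EuclideanSpace ℝ (Fin d)) (1/4)) ≠ ⊤ :=
    (measure_closedBall_lt_top).ne
  have hmpos : 0 < m := by
    apply ENNReal.toReal_pos _ hmball_fin
    exact (Metric.measure_closedBall_pos volume (0 : EuclideanSpace ℝ (Fin d))
      (by norm_num : (0:ℝ) < 1/4)).ne'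
  have hmofReal : volume (Metric.closedBall (0 : EuclideanSpace ℝ (Fin d)) (1/4))
      = ENNReal.ofReal m := (ENNReal.ofReal_toReal hmball_fin).symm
  -- density measurability
  have hρmeas : Measurable
      (fun x : EuclideanSpace ℝ (Fin d) => ENNReal.ofReal (V x ^ (-(d:ℝ)))) := by
    apply Measurable.ennreal_ofReal
    exact (hV1.continuous.rpow_const fun x => Or.inl (hVpos x).ne').measurable
  -- key estimate
  have key : ∀ x : EuclideanSpace ℝ (Fin d), 0 < ‖gradient φ x‖ →
      (V 0 * (2 + ‖x‖) ^ A) ^ (-(d:ℝ)) * m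
        ≤ Real.exp (-‖gradient φ x‖^2/36) * K := by
    intro x hR
    set R : ℝ := ‖gradient φ x‖ with hRdef
    set e : EuclideanSpace ℝ (Fin d) := R⁻¹ • gradient φ x with hedef
    have hnorme : ‖e‖ = 1 := by
      rw [hedef, norm_smul, norm_inv, Real.norm_eq_abs, abs_of_pos hR, ← hRdef,
        inv_mul_cancel₀ hR.ne']
    set ctr : EuclideanSpace ℝ (Fin d) := x + (2⁻¹ : ℝ) • e with hctrdef
    set S : Set (EuclideanSpace ℝ (Fin d)) := Metric.closedBall ctr 4⁻¹ with hSdef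
    have hnormzx : ∀ z ∈ S, ‖z - x‖ ≤ 3/4 := by
      intro z hz
      have hw : ‖z - ctr‖ ≤ 4⁻¹ := by
        rw [← dist_eq_norm]; exact Metric.mem_closedBall.mp hz
      have hzx : z - x = (z - ctr) + (2⁻¹ : ℝ) • e := by rw [hctrdef]; abel
      rw [hzx]
      calc ‖(z - ctr) + (2⁻¹ : ℝ) • e‖ ≤ ‖z - ctr‖ + ‖(2⁻¹ : ℝ) • e‖ := norm_add_le _ _
        _ ≤ 4⁻¹ + 2⁻¹ := by
            apply add_le_add hw
            rw [norm_smul, hnorme]; norm_num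
        _ = 3/4 := by norm_num
    -- geometric claim
    have hsub : S ⊆ (fun z => gradient φ z) ⁻¹'
        {y : EuclideanSpace ℝ (Fin d) | R/3 ≤ ‖y‖} := by
      intro z hz
      have hw : ‖z - ctr‖ ≤ 4⁻¹ := by
        rw [← dist_eq_norm]; exact Metric.mem_closedBall.mp hz
      have hzx : z - x = (z - ctr) + (2⁻¹ : ℝ) • e := by
        rw [hctrdef]; abel
      have hfo := aux_convex_first_order hφconv hφd x z
      have h1 : ⟪gradient φ x, z - x⟫ ≤ ⟪gradient φ z, z - x⟫ := hfo.1.trans hfo.2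
      have hinner_e : ⟪gradient φ x, e⟫ = R := by
        rw [hedef, real_inner_smul_right, real_inner_self_eq_norm_sq, ← hRdef]
        field_simp
      have hinner_w : -(R * 4⁻¹) ≤ ⟪gradient φ x, z - ctr⟫ := by
        have habs := abs_real_inner_le_norm (gradient φ x) (z - ctr)
        have h2 : |⟪gradient φ x, z - ctr⟫| ≤ R * 4⁻¹ := by
          calc |⟪gradient φ x, z - ctr⟫| ≤ ‖gradient φ x‖ * ‖z - ctr‖ := habs
            _ ≤ R * 4⁻¹ := by rw [← hRdef]; exact mul_le_mul_of_nonneg_left hw hR.le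
        linarith [neg_abs_le ⟪gradient φ x, z - ctr⟫]
      have hlow : R/4 ≤ ⟪gradient φ x, z - x⟫ := by
        rw [hzx, inner_add_right, real_inner_smul_right, hinner_e]
        linarith
      have hup : ⟪gradient φ z, z - x⟫ ≤ ‖gradient φ z‖ * (3/4) := by
        calc ⟪gradient φ z, z - x⟫ ≤ ‖gradient φ z‖ * ‖z - x‖ := real_inner_le_norm _ _
          _ ≤ ‖gradient φ z‖ * (3/4) :=
            mul_le_mul_of_nonneg_left (hnormzx z hz) (norm_nonneg _)
      have hfin : R/4 ≤ ‖gradient φ z‖ * (3/4) := le_trans hlow (le_trans h1 hup)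
      show R/3 ≤ ‖gradient φ z‖
      linarith
    -- density lower bound on S
    set lb : ℝ := (V 0 * (2 + ‖x‖) ^ A) ^ (-(d:ℝ)) with hlbdef
    have hVub : ∀ z ∈ S, V z ≤ V 0 * (2 + ‖x‖) ^ A := by
      intro z hz
      have hzn : ‖z‖ ≤ 1 + ‖x‖ := by
        have h1 := hnormzx z hz
        calc ‖z‖ = ‖(z - x) + x‖ := by rw [sub_add_cancel]
          _ ≤ ‖z - x‖ + ‖x‖ := norm_add_le _ _
          _ ≤ 1 + ‖x‖ := by linarith
      calc V z ≤ V 0 * (1 + ‖z‖) ^ A := aux_V_growth hVpos hV1 hV2 z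
        _ ≤ V 0 * (2 + ‖x‖) ^ A := by
            apply mul_le_mul_of_nonneg_left _ (hVpos 0).le
            apply Real.rpow_le_rpow (by positivity) (by linarith) hA.le
    have hlb_le : ∀ z ∈ S, ENNReal.ofReal lb ≤ ENNReal.ofReal (V z ^ (-(d:ℝ))) := by
      intro z hz
      apply ENNReal.ofReal_le_ofReal
      exact Real.rpow_le_rpow_of_nonpos (hVpos z) (hVub z hz)
        (neg_nonpos.mpr (by positivity))
    -- measure chain
    have hμS_lb : ENNReal.ofReal lb * ENNReal.ofReal m ≤ μ S := by
      have hSm : MeasurableSet S := Metric.isClosed_closedBall.measurableSet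
      rw [hμdef, withDensity_apply _ hSm]
      have h1 : ENNReal.ofReal lb * ENNReal.ofReal m
          = ∫⁻ _ in S, ENNReal.ofReal lb ∂(volume) := by
        rw [setLIntegral_const]
        congr 1
        rw [hSdef, Measure.addHaar_closedBall_center, ← hmofReal]
        norm_num
      rw [h1]
      exact setLIntegral_mono hρmeas fun z hz => hlb_le z hz
    have hμS_ub : μ S ≤ ENNReal.ofReal (Real.exp (-R^2/36) * K) := by
      have hSr : MeasurableSet {y : EuclideanSpace ℝ (Fin d) | R/3 ≤ ‖y‖} :=
        (isClosed_le continuous_const continuous_norm).measurableSet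
      calc μ S ≤ μ ((fun z => gradient φ z) ⁻¹'
              {y : EuclideanSpace ℝ (Fin d) | R/3 ≤ ‖y‖}) := measure_mono hsub
        _ = (Measure.map (fun z : EuclideanSpace ℝ (Fin d) => gradient φ z) μ)
              {y : EuclideanSpace ℝ (Fin d) | R/3 ≤ ‖y‖} :=
            (Measure.map_apply hTcont.measurable hSr).symm
        _ = (volume.withDensity fun y : EuclideanSpace ℝ (Fin d) =>
              ENNReal.ofReal (gd * Real.exp (-‖y‖^2 / 2)))
              {y : EuclideanSpace ℝ (Fin d) | R/3 ≤ ‖y‖} := by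
            rw [hμdef, hpush]
        _ ≤ ENNReal.ofReal (Real.exp (-(R/3)^2/4) * K) := tail (R/3) (div_nonneg hR.le (by norm_num))
        _ = ENNReal.ofReal (Real.exp (-R^2/36) * K) := by
            norm_num
            ring_nf
    have hlbpos : 0 ≤ lb := by
      rw [hlbdef]
      exact (Real.rpow_pos_of_pos (mul_pos (hVpos 0)
        (Real.rpow_pos_of_pos (by positivity) A)) _).le
    have hcomb : ENNReal.ofReal (lb * m) ≤ ENNReal.ofReal (Real.exp (-R^2/36) * K) := by
      rw [ENNReal.ofReal_mul hlbpos]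
      exact hμS_lb.trans hμS_ub
    exact (ENNReal.ofReal_le_ofReal_iff
      (mul_nonneg (Real.exp_nonneg _) hKpos.le)).mp hcomb
  -- conclude
  have hd1 : (1:ℝ) ≤ (d:ℝ) := by exact_mod_cast hd
  set D : ℝ := Real.log K - Real.log m + (d:ℝ) * Real.log (V 0) with hDdef
  set C0 : ℝ := 36 * (max D 0 + (d:ℝ) * A + 1) with hC0def
  have hC0pos : 0 < C0 := by
    have h1 : 0 ≤ max D 0 := le_max_right _ _
    have h2 : 0 < (d:ℝ) * A := by positivity
    rw [hC0def]; nlinarith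
  refine ⟨Real.sqrt C0, Real.sqrt_pos.mpr hC0pos, fun x => ?_⟩
  set L : ℝ := Real.log (1 + ‖x‖) with hLdef
  have hL : 0 ≤ L := Real.log_nonneg (by linarith [norm_nonneg x])
  rcases eq_or_lt_of_le (norm_nonneg (gradient φ x)) with h0 | hR
  · rw [← h0]
    positivity
  · have hkey := key x hR
    set R : ℝ := ‖gradient φ x‖ with hRdef
    set lb : ℝ := (V 0 * (2 + ‖x‖) ^ A) ^ (-(d:ℝ)) with hlbdef
    have h2x : (0:ℝ) < 2 + ‖x‖ := by positivity
    have hlbpos : 0 < lb := Real.rpow_pos_of_pos (mul_pos (hVpos 0)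
      (Real.rpow_pos_of_pos h2x A)) _
    have hlog : Real.log (lb * m) ≤ -R^2/36 + Real.log K := by
      calc Real.log (lb * m) ≤ Real.log (Real.exp (-R^2/36) * K) :=
            Real.log_le_log (by positivity) hkey
        _ = -R^2/36 + Real.log K := by
            rw [Real.log_mul (Real.exp_ne_zero _) hKpos.ne', Real.log_exp]
    have hloglb : Real.log lb = -(d:ℝ) * (Real.log (V 0) + A * Real.log (2 + ‖x‖)) := by
      rw [hlbdef, Real.log_rpow (mul_pos (hVpos 0) (Real.rpow_pos_of_pos h2x A)),
        Real.log_mul (hVpos 0).ne' (by positivity : (0:ℝ) < (2 + ‖x‖) ^ A).ne',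
        Real.log_rpow h2x]
    have hloglbm : Real.log (lb * m) = Real.log lb + Real.log m :=
      Real.log_mul hlbpos.ne' hmpos.ne'
    have hRsq : R^2 ≤ 36 * (D + (d:ℝ) * A * Real.log (2 + ‖x‖)) := by
      rw [hloglbm, hloglb] at hlog
      rw [hDdef]
      nlinarith
    have hlog2x : Real.log (2 + ‖x‖) ≤ 1 + L := by
      have h1 : Real.log (2 + ‖x‖) ≤ Real.log (2 * (1 + ‖x‖)) :=
        Real.log_le_log h2x (by nlinarith [norm_nonneg x])
      have h2 : Real.log (2 * (1 + ‖x‖)) = Real.log 2 + L := by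
        rw [Real.log_mul two_ne_zero (by positivity : (0:ℝ) < 1 + ‖x‖).ne', hLdef]
      have h3 : Real.log 2 ≤ 1 := by
        have h4 := Real.log_le_sub_one_of_pos (by norm_num : (0:ℝ) < 2)
        linarith
      linarith
    have hRsq2 : R^2 ≤ C0 * (1 + L) := by
      have hDmax : D ≤ max D 0 := le_max_left _ _
      have hdA : 0 < (d:ℝ) * A := by positivity
      have h1 : (d:ℝ) * A * Real.log (2 + ‖x‖) ≤ (d:ℝ) * A * (1 + L) :=
        mul_le_mul_of_nonneg_left hlog2x hdA.le
      have hmax0 : 0 ≤ max D 0 := le_max_right _ _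
      calc R^2 ≤ 36 * (D + (d:ℝ) * A * Real.log (2 + ‖x‖)) := hRsq
        _ ≤ 36 * (max D 0 + (d:ℝ) * A * (1 + L)) := by nlinarith
        _ ≤ C0 * (1 + L) := by rw [hC0def]; nlinarith
    calc R ≤ Real.sqrt (C0 * (1 + L)) := Real.le_sqrt_of_sq_le hRsq2
      _ = Real.sqrt C0 * Real.sqrt (1 + L) := Real.sqrt_mul hC0pos.le _
end

section
/- Let d ≥ 1, let V, W : ℝ^d → ℝ be positive functions, let φ : ℝ^d → ℝ be a convex function of class C², and let F(S) := (det S)^{1/d} on symmetric positive semidefinite matrices. Fix ε > 0, a unit vector ē, a point x̄, and δ ∈ ℝ, and assume: ∇φ(x̄+εē) + ∇φ(x̄−εē) = 2∇φ(x̄); ∇φ(x̄+εē) − ∇φ(x̄−εē) = 2δē; D²φ(x̄+εē) + D²φ(x̄−εē) ≤ 2D²φ(x̄) as symmetric matrices; and F(D²φ(x)) = W(∇φ(x))/V(x) at the three points x ∈ {x̄, x̄+εē, x̄−εē}. Then, writing ȳ := ∇φ(x̄), h^α(z,e) := h(z+αe)+h(z−αe)−2h(z), and Γ^± := (W(ȳ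 ± δē) − W(ȳ)) · (V(x̄ ± εē) − V(x̄))/V(x̄ ± εē), one has W^δ(ȳ, ē) ≤ Γ^+ + Γ^− + V(x̄)W(ȳ) · (−1/V)^ε(x̄, ē). -/
open scoped RealInnerProductSpace
open Matrix

section Helpers

/-- trace of a real symmetric PSD matrix equals sum of eigenvalues; AM-GM bound. -/
lemma psd_det_rpow_le_trace_div {d : ℕ} (hd : 1 ≤ d) {A : Matrix (Fin d) (Fin d) ℝ}
    (hA : A.PosSemidef) : A.det ^ ((1 : ℝ)/d) ≤ A.trace / d := by
  have hH := hA.1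
  have hdpos : (0:ℝ) < d := by exact_mod_cast hd
  have hdet : A.det = ∏ i, hH.eigenvalues i := by
    simpa using hH.det_eq_prod_eigenvalues
  have htrace : A.trace = ∑ i, hH.eigenvalues i := by
    rw [hH.trace_eq_sum_eigenvalues]
    simp
  have hnn : ∀ i ∈ Finset.univ, (0:ℝ) ≤ hH.eigenvalues i := fun i _ => hA.eigenvalues_nonneg i
  have hw1 : ∑ _i : Fin d, (1:ℝ)/d = 1 := by
    rw [Finset.sum_const, Finset.card_univ, Fintype.card_fin, nsmul_eq_mul]
    field_simp
  have hgm := Real.geom_mean_le_arith_mean_weighted Finset.univ (fun _ => (1:ℝ)/d)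
    hH.eigenvalues (fun i _ => by positivity) hw1 hnn
  rw [hdet, htrace]
  calc (∏ i, hH.eigenvalues i) ^ ((1:ℝ)/d)
      = ∏ i, hH.eigenvalues i ^ ((1:ℝ)/d) := (Real.finset_prod_rpow _ _ hnn _).symm
    _ ≤ ∑ i, (1:ℝ)/d * hH.eigenvalues i := hgm
    _ = (∑ i, hH.eigenvalues i) / d := by rw [← Finset.mul_sum]; ring

lemma psd_det_nonneg {d : ℕ} {A : Matrix (Fin d) (Fin d) ℝ} (hA : A.PosSemidef) :
    0 ≤ A.det := by
  rw [show A.det = ∏ i, hA.1.eigenvalues i by simpa using hA.1.det_eq_prod_eigenvalues]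
  exact Finset.prod_nonneg fun i _ => hA.eigenvalues_nonneg i
open scoped MatrixOrder in
lemma psd_det_rpow_add_le {d : ℕ} (hd : 1 ≤ d) {A B : Matrix (Fin d) (Fin d) ℝ}
    (hA : A.PosSemidef) (hB : B.PosSemidef) :
    A.det ^ ((1:ℝ)/d) + B.det ^ ((1:ℝ)/d) ≤ (A + B).det ^ ((1:ℝ)/d) := by
  have hdpos : (0:ℝ) < d := by exact_mod_cast hd
  have hcne : (1:ℝ)/d ≠ 0 := by positivity
  have hS : (A + B).PosSemidef := hA.add hB
  by_cases h0 : (A + B).det = 0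
  · obtain ⟨v, hv0, hv⟩ := (Matrix.exists_mulVec_eq_zero_iff).mpr h0
    have hsum : star v ⬝ᵥ A *ᵥ v + star v ⬝ᵥ B *ᵥ v = 0 := by
      have h : star v ⬝ᵥ (A + B) *ᵥ v = 0 := by rw [hv, dotProduct_zero]
      rwa [add_mulVec, dotProduct_add] at h
    have ha0 : star v ⬝ᵥ A *ᵥ v = 0 := le_antisymm (by linarith [hB.dotProduct_mulVec_nonneg v]) (hA.dotProduct_mulVec_nonneg v)
    have hb0 : star v ⬝ᵥ B *ᵥ v = 0 := le_antisymm (by linarith [hA.dotProduct_mulVec_nonneg v]) (hB.dotProduct_mulVec_nonneg v)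
    have hdA : A.det = 0 := Matrix.exists_mulVec_eq_zero_iff.mp
      ⟨v, hv0, (hA.dotProduct_mulVec_zero_iff v).mp ha0⟩
    have hdB : B.det = 0 := Matrix.exists_mulVec_eq_zero_iff.mp
      ⟨v, hv0, (hB.dotProduct_mulVec_zero_iff v).mp hb0⟩
    rw [h0, hdA, hdB, Real.zero_rpow hcne]
    norm_num
  · set S := A + B with hSdef
    have hQpsd : (CFC.sqrt S).PosSemidef := (CFC.sqrt_nonneg S).posSemidef
    set Q := CFC.sqrt S with hQdef
    have hQQ : Q * Q = S := CFC.sqrt_mul_sqrt_self S hS.nonneg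
    have hdetS : S.det = Q.det * Q.det := by rw [← hQQ, det_mul]
    have hdetQ : Q.det ≠ 0 := by
      intro h; exact h0 (by rw [hdetS, h, mul_zero])
    have hQunit : IsUnit Q.det := isUnit_iff_ne_zero.mpr hdetQ
    set R := Q⁻¹ with hRdef
    have hRH : Rᴴ = R := by
      rw [hRdef, Matrix.conjTranspose_nonsing_inv, hQpsd.1.eq]
    have hRQ : R * Q = 1 := Matrix.nonsing_inv_mul Q hQunit
    have hQR : Q * R = 1 := Matrix.mul_nonsing_inv Q hQunit
    have hRA : (R * A * R).PosSemidef := by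
      have h := hA.mul_mul_conjTranspose_same R; rwa [hRH] at h
    have hRB : (R * B * R).PosSemidef := by
      have h := hB.mul_mul_conjTranspose_same R; rwa [hRH] at h
    have hsum1 : R * A * R + R * B * R = 1 := by
      have h : R * A * R + R * B * R = R * S * R := by
        rw [hSdef, Matrix.mul_add, Matrix.add_mul]
      rw [h, ← hQQ, show R * (Q * Q) * R = (R * Q) * (Q * R) by
        rw [Matrix.mul_assoc, Matrix.mul_assoc, Matrix.mul_assoc], hRQ, hQR, Matrix.one_mul]
    have htr : (R * A * R).trace + (R * B * R).trace = d := by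
      rw [← trace_add, hsum1, trace_one]
      simp
    have hdetR : R.det = (Q.det)⁻¹ := by
      rw [hRdef, Matrix.det_nonsing_inv, Ring.inverse_eq_inv]
    have hdetRA : S.det * (R * A * R).det = A.det := by
      rw [det_mul, det_mul, hdetR, hdetS]; field_simp
    have hdetRB : S.det * (R * B * R).det = B.det := by
      rw [det_mul, det_mul, hdetR, hdetS]; field_simp
    have hSnn : (0:ℝ) ≤ S.det := psd_det_nonneg hS
    have key : (R * A * R).det ^ ((1:ℝ)/d) + (R * B * R).det ^ ((1:ℝ)/d) ≤ 1 := by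
      calc (R * A * R).det ^ ((1:ℝ)/d) + (R * B * R).det ^ ((1:ℝ)/d)
          ≤ (R * A * R).trace / d + (R * B * R).trace / d :=
            add_le_add (psd_det_rpow_le_trace_div hd hRA) (psd_det_rpow_le_trace_div hd hRB)
        _ = ((R * A * R).trace + (R * B * R).trace) / d := by ring
        _ = 1 := by rw [htr]; field_simp
    calc A.det ^ ((1:ℝ)/d) + B.det ^ ((1:ℝ)/d)
        = S.det ^ ((1:ℝ)/d) * ((R * A * R).det ^ ((1:ℝ)/d) + (R * B * R).det ^ ((1:ℝ)/d)) := by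
          rw [mul_add, ← Real.mul_rpow hSnn (psd_det_nonneg hRA),
            ← Real.mul_rpow hSnn (psd_det_nonneg hRB), hdetRA, hdetRB]
      _ ≤ S.det ^ ((1:ℝ)/d) * 1 :=
          mul_le_mul_of_nonneg_left key (Real.rpow_nonneg hSnn _)
      _ = S.det ^ ((1:ℝ)/d) := mul_one _
variable {d : ℕ}

/-- The matrix of a continuous linear endomorphism of Euclidean space in the standard
orthonormal basis. -/
noncomputable def matOf (d : ℕ) (f : EuclideanSpace ℝ (Fin d) →L[ℝ] EuclideanSpace ℝ (Fin d)) :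
    Matrix (Fin d) (Fin d) ℝ :=
  Matrix.of fun i j => ⟪(EuclideanSpace.basisFun (Fin d) ℝ) i,
    f ((EuclideanSpace.basisFun (Fin d) ℝ) j)⟫

lemma matOf_eq_toMatrix (f : EuclideanSpace ℝ (Fin d) →L[ℝ] EuclideanSpace ℝ (Fin d)) :
    matOf d f = LinearMap.toMatrix (EuclideanSpace.basisFun (Fin d) ℝ).toBasis
      (EuclideanSpace.basisFun (Fin d) ℝ).toBasis f.toLinearMap := by
  ext i j
  rw [LinearMap.toMatrix_apply]
  simp only [OrthonormalBasis.coe_toBasis, OrthonormalBasis.coe_toBasis_repr_apply]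
  rw [OrthonormalBasis.repr_apply_apply]
  rfl

lemma det_matOf (f : EuclideanSpace ℝ (Fin d) →L[ℝ] EuclideanSpace ℝ (Fin d)) :
    (matOf d f).det = LinearMap.det f.toLinearMap := by
  rw [matOf_eq_toMatrix,
    LinearMap.det_toMatrix (EuclideanSpace.basisFun (Fin d) ℝ).toBasis]

lemma quad_matOf (f : EuclideanSpace ℝ (Fin d) →L[ℝ] EuclideanSpace ℝ (Fin d))
    (c : Fin d → ℝ) :
    star c ⬝ᵥ (matOf d f) *ᵥ c
      = ⟪((EuclideanSpace.basisFun (Fin d) ℝ).repr.symm (WithLp.toLp 2 c) : EuclideanSpace ℝ (Fin d)),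
          f ((EuclideanSpace.basisFun (Fin d) ℝ).repr.symm (WithLp.toLp 2 c))⟫ := by
  set b := EuclideanSpace.basisFun (Fin d) ℝ
  set x : EuclideanSpace ℝ (Fin d) := b.repr.symm (WithLp.toLp 2 c) with hx
  have hc : ∀ i, c i = ⟪b i, x⟫ := by
    intro i
    rw [← OrthonormalBasis.repr_apply_apply, hx, LinearIsometryEquiv.apply_symm_apply]
  have hfx : ∀ i, (matOf d f *ᵥ c) i = ⟪b i, f x⟫ := by
    intro i
    have hxsum : x = ∑ j, c j • b j := by
      conv_lhs => rw [← b.sum_repr x]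
      refine Finset.sum_congr rfl fun j _ => ?_
      rw [hc j, OrthonormalBasis.repr_apply_apply]
    rw [mulVec, dotProduct]
    rw [show f x = ∑ j, c j • f (b j) by rw [hxsum, map_sum]; simp, inner_sum]
    refine Finset.sum_congr rfl fun j _ => ?_
    rw [real_inner_smul_right]
    simp only [matOf, Matrix.of_apply]
    ring
  rw [dotProduct]
  calc ∑ i, (star c) i * (matOf d f *ᵥ c) i
      = ∑ i, ⟪x, b i⟫ * ⟪b i, f x⟫ := by
        refine Finset.sum_congr rfl fun i _ => ?_
        rw [hfx i, Pi.star_apply, star_trivial, hc i, real_inner_comm]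
    _ = ⟪x, f x⟫ := OrthonormalBasis.sum_inner_mul_inner b x (f x)

lemma posSemidef_matOf (f : EuclideanSpace ℝ (Fin d) →L[ℝ] EuclideanSpace ℝ (Fin d))
    (hsym : ∀ u v, ⟪f u, v⟫ = ⟪f v, u⟫) (hpos : ∀ v, 0 ≤ ⟪f v, v⟫) :
    (matOf d f).PosSemidef := by
  refine Matrix.PosSemidef.of_dotProduct_mulVec_nonneg ?_ ?_
  · ext i j
    simp only [conjTranspose_apply, star_trivial, matOf, Matrix.of_apply]
    rw [real_inner_comm, hsym]
    exact real_inner_comm _ _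
  · intro c
    rw [quad_matOf]
    rw [real_inner_comm]
    exact hpos _
variable {d : ℕ}

noncomputable def dualIso (d : ℕ) :
    StrongDual ℝ (EuclideanSpace ℝ (Fin d)) ≃ₗᵢ[ℝ] EuclideanSpace ℝ (Fin d) :=
  (InnerProductSpace.toDual ℝ (EuclideanSpace ℝ (Fin d))).symm

lemma gradient_eq_dualIso (φ : EuclideanSpace ℝ (Fin d) → ℝ) :
    (fun y => gradient φ y) = fun y => dualIso d (fderiv ℝ φ y) :=
  rfl

lemma contDiff_one_gradient (φ : EuclideanSpace ℝ (Fin d) → ℝ) (hφ2 : ContDiff ℝ 2 φ) :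
    ContDiff ℝ 1 (fun y => gradient φ y) := by
  rw [gradient_eq_dualIso]
  have h1 : ContDiff ℝ 1 (fderiv ℝ φ) := hφ2.fderiv_right (by norm_num)
  exact (((dualIso d).toContinuousLinearEquiv :
    StrongDual ℝ (EuclideanSpace ℝ (Fin d)) →L[ℝ] EuclideanSpace ℝ (Fin d)).contDiff).comp h1

lemma fderiv_gradient_symm (φ : EuclideanSpace ℝ (Fin d) → ℝ) (hφ2 : ContDiff ℝ 2 φ)
    (x : EuclideanSpace ℝ (Fin d)) (u v : EuclideanSpace ℝ (Fin d)) :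
    ⟪fderiv ℝ (fun y => gradient φ y) x u, v⟫ = ⟪fderiv ℝ (fun y => gradient φ y) x v, u⟫ := by
  have hcomp : fderiv ℝ (fun y => gradient φ y) x
      = (((dualIso d) : StrongDual ℝ (EuclideanSpace ℝ (Fin d)) →L[ℝ]
          EuclideanSpace ℝ (Fin d))).comp (fderiv ℝ (fderiv ℝ φ) x) := by
    rw [gradient_eq_dualIso]
    exact (dualIso d).comp_fderiv
  have hsymm : IsSymmSndFDerivAt ℝ φ x :=
    (hφ2.contDiffAt).isSymmSndFDerivAt (by norm_num)
  have key : ∀ w z : EuclideanSpace ℝ (Fin d),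
      ⟪fderiv ℝ (fun y => gradient φ y) x w, z⟫ = fderiv ℝ (fderiv ℝ φ) x w z := by
    intro w z
    rw [hcomp]
    exact InnerProductSpace.toDual_symm_apply
  rw [key, key]
  exact hsymm u v

lemma fderiv_gradient_psd (φ : EuclideanSpace ℝ (Fin d) → ℝ)
    (hφconv : ConvexOn ℝ Set.univ φ) (hφ2 : ContDiff ℝ 2 φ)
    (x : EuclideanSpace ℝ (Fin d)) (v : EuclideanSpace ℝ (Fin d)) :
    0 ≤ ⟪fderiv ℝ (fun y => gradient φ y) x v, v⟫ := by
  have hφdiff : Differentiable ℝ φ := hφ2.differentiable (by norm_num)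
  have hgdiff : Differentiable ℝ (fun y => gradient φ y) :=
    (contDiff_one_gradient φ hφ2).differentiable (by norm_num)
  set c : ℝ → EuclideanSpace ℝ (Fin d) := fun t => x + t • v with hcdef
  have hc : ∀ t : ℝ, HasDerivAt c v t := by
    intro t
    have h : HasDerivAt (fun s : ℝ => s • v) ((1:ℝ) • v) t := (hasDerivAt_id t).smul_const v
    have h' := h.const_add x
    simp only [one_smul] at h'
    exact h'
  have hc0 : c 0 = x := by simp [hcdef]
  set ψ : ℝ → ℝ := fun t => ⟪v, gradient φ (c t)⟫ with hψdef
  have hg1 : ∀ t : ℝ, HasDerivAt (fun s => φ (c s)) (ψ t) t := by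
    intro t
    have hfd : HasFDerivAt φ (fderiv ℝ φ (c t)) (c t) := (hφdiff (c t)).hasFDerivAt
    have h := hfd.comp_hasDerivAt t (hc t)
    have heq : fderiv ℝ φ (c t) v = ψ t := by
      have h2 : fderiv ℝ φ (c t) = InnerProductSpace.toDual ℝ (EuclideanSpace ℝ (Fin d))
          (gradient φ (c t)) :=
        (LinearIsometryEquiv.apply_symm_apply _ _).symm
      rw [h2, hψdef, InnerProductSpace.toDual_apply_apply]
      exact real_inner_comm _ _
    rwa [heq] at h
  have hg1conv : ConvexOn ℝ Set.univ (fun s => φ (c s)) := by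
    have h := hφconv.comp_affineMap (AffineMap.lineMap x (x + v))
    have heq : (fun s => φ (c s)) = φ ∘ (AffineMap.lineMap x (x + v)) := by
      funext s
      simp [hcdef, AffineMap.lineMap_apply, add_comm]
    rw [heq]
    simpa using h
  have hmono : Monotone ψ := by
    have h := hg1conv.monotoneOn_deriv (fun t _ => (hg1 t).differentiableAt)
    have hderiv : deriv (fun s => φ (c s)) = ψ := funext fun t => (hg1 t).deriv
    rw [hderiv] at h
    exact monotoneOn_univ.mp h
  have hψ' : HasDerivAt ψ ⟪v, fderiv ℝ (fun y => gradient φ y) x v⟫ 0 := by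
    have hgfd : HasFDerivAt (fun y => gradient φ y)
        (fderiv ℝ (fun y => gradient φ y) x) (c 0) := by
      rw [hc0]; exact (hgdiff x).hasFDerivAt
    have h1 : HasDerivAt (fun t => gradient φ (c t))
        (fderiv ℝ (fun y => gradient φ y) x v) 0 := hgfd.comp_hasDerivAt 0 (hc 0)
    exact ((innerSL ℝ v).hasFDerivAt).comp_hasDerivAt 0 h1
  have hnn : 0 ≤ ⟪v, fderiv ℝ (fun y => gradient φ y) x v⟫ := by
    have htends := hasDerivAt_iff_tendsto_slope.mp hψ'
    have htends' : Filter.Tendsto (slope ψ 0) (nhdsWithin 0 (Set.Ioi 0)) (nhds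
        ⟪v, fderiv ℝ (fun y => gradient φ y) x v⟫) :=
      htends.mono_left (nhdsWithin_mono 0 (fun t ht => Set.mem_compl_singleton_iff.mpr
        (ne_of_gt ht)))
    refine ge_of_tendsto htends' ?_
    filter_upwards [self_mem_nhdsWithin] with t ht
    rw [slope_def_field]
    apply div_nonneg
    · have h := hmono (le_of_lt (show (0:ℝ) < t from ht))
      linarith
    · simp only [sub_zero]
      exact le_of_lt ht
  rw [real_inner_comm]
  exact hnn

end Helpers

/-- The crucial discrete inequality (3.16) on second-order incremental ratios,
obtained from the concavity of `S ↦ (det S)^{1/d}`. -/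
theorem discrete_incremental_ratio_inequality
    (d : ℕ) (hd : 1 ≤ d)
    (V W : EuclideanSpace ℝ (Fin d) → ℝ)
    (hVpos : ∀ x, 0 < V x) (hWpos : ∀ y, 0 < W y)
    (φ : EuclideanSpace ℝ (Fin d) → ℝ)
    (hφconv : ConvexOn ℝ Set.univ φ) (hφ2 : ContDiff ℝ 2 φ)
    (ε δ : ℝ) (hε : 0 < ε)
    (ebar xbar : EuclideanSpace ℝ (Fin d)) (hebar : ‖ebar‖ = 1)
    (h1 : gradient φ (xbar + ε • ebar) + gradient φ (xbar - ε • ebar)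
      = (2 : ℝ) • gradient φ xbar)
    (h2 : gradient φ (xbar + ε • ebar) - gradient φ (xbar - ε • ebar)
      = (2 * δ) • ebar)
    (h3 : ∀ v, ⟪fderiv ℝ (fun y => gradient φ y) (xbar + ε • ebar) v, v⟫
        + ⟪fderiv ℝ (fun y => gradient φ y) (xbar - ε • ebar) v, v⟫
      ≤ 2 * ⟪fderiv ℝ (fun y => gradient φ y) xbar v, v⟫)
    (hMA : ∀ x ∈ ({xbar, xbar + ε • ebar, xbar - ε • ebar} :
        Set (EuclideanSpace ℝ (Fin d))),
      (LinearMap.det (fderiv ℝ (fun y => gradient φ y) x).toLinearMap)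
        ^ ((1 : ℝ) / d) = W (gradient φ x) / V x) :
    W (gradient φ xbar + δ • ebar) + W (gradient φ xbar - δ • ebar)
        - 2 * W (gradient φ xbar)
      ≤ (W (gradient φ xbar + δ • ebar) - W (gradient φ xbar))
            * ((V (xbar + ε • ebar) - V xbar) / V (xbar + ε • ebar))
        + (W (gradient φ xbar - δ • ebar) - W (gradient φ xbar))
            * ((V (xbar - ε • ebar) - V xbar) / V (xbar - ε • ebar))
        + V xbar * W (gradient φ xbar)
            * ((-1 / V (xbar + ε • ebar)) + (-1 / V (xbar - ε • ebar))
                - 2 * (-1 / V xbar)) := by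
  have hdpos : (0:ℝ) < d := by exact_mod_cast hd
  -- gradient identities
  have hp : gradient φ (xbar + ε • ebar) = gradient φ xbar + δ • ebar := by
    apply smul_right_injective (EuclideanSpace ℝ (Fin d)) (two_ne_zero (α := ℝ))
    show (2:ℝ) • _ = (2:ℝ) • _
    calc (2:ℝ) • gradient φ (xbar + ε • ebar)
        = (gradient φ (xbar + ε • ebar) + gradient φ (xbar - ε • ebar))
          + (gradient φ (xbar + ε • ebar) - gradient φ (xbar - ε • ebar)) := by module
      _ = (2:ℝ) • gradient φ xbar + (2 * δ) • ebar := by rw [h1, h2]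
      _ = (2:ℝ) • (gradient φ xbar + δ • ebar) := by module
  have hm : gradient φ (xbar - ε • ebar) = gradient φ xbar - δ • ebar := by
    apply smul_right_injective (EuclideanSpace ℝ (Fin d)) (two_ne_zero (α := ℝ))
    show (2:ℝ) • _ = (2:ℝ) • _
    calc (2:ℝ) • gradient φ (xbar - ε • ebar)
        = (gradient φ (xbar + ε • ebar) + gradient φ (xbar - ε • ebar))
          - (gradient φ (xbar + ε • ebar) - gradient φ (xbar - ε • ebar)) := by module
      _ = (2:ℝ) • gradient φ xbar - (2 * δ) • ebar := by rw [h1, h2]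
      _ = (2:ℝ) • (gradient φ xbar - δ • ebar) := by module
  -- the three second-derivative maps and their matrices
  set Tp := fderiv ℝ (fun y => gradient φ y) (xbar + ε • ebar) with hTp
  set Tm := fderiv ℝ (fun y => gradient φ y) (xbar - ε • ebar) with hTm
  set Tb := fderiv ℝ (fun y => gradient φ y) xbar with hTb
  have hMpPSD : (matOf d Tp).PosSemidef :=
    posSemidef_matOf Tp (fderiv_gradient_symm φ hφ2 _) (fderiv_gradient_psd φ hφconv hφ2 _)
  have hMmPSD : (matOf d Tm).PosSemidef :=
    posSemidef_matOf Tm (fderiv_gradient_symm φ hφ2 _) (fderiv_gradient_psd φ hφconv hφ2 _)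
  have hMbPSD : (matOf d Tb).PosSemidef :=
    posSemidef_matOf Tb (fderiv_gradient_symm φ hφ2 _) (fderiv_gradient_psd φ hφconv hφ2 _)
  set C : EuclideanSpace ℝ (Fin d) →L[ℝ] EuclideanSpace ℝ (Fin d) :=
    (2:ℝ) • Tb - Tp - Tm with hC
  have hCsym : ∀ u v, ⟪C u, v⟫ = ⟪C v, u⟫ := by
    intro u v
    simp only [hC, ContinuousLinearMap.coe_sub', Pi.sub_apply,
      ContinuousLinearMap.coe_smul', Pi.smul_apply, inner_sub_left, real_inner_smul_left]
    rw [fderiv_gradient_symm φ hφ2 xbar u v, fderiv_gradient_symm φ hφ2 _ u v,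
      fderiv_gradient_symm φ hφ2 _ u v]
  have hCpos : ∀ v, 0 ≤ ⟪C v, v⟫ := by
    intro v
    have h := h3 v
    simp only [hC, ContinuousLinearMap.coe_sub', Pi.sub_apply,
      ContinuousLinearMap.coe_smul', Pi.smul_apply, inner_sub_left, real_inner_smul_left]
    linarith
  have hMCPSD : (matOf d C).PosSemidef := posSemidef_matOf C hCsym hCpos
  have hMatsum : matOf d Tp + matOf d Tm + matOf d C = (2:ℝ) • matOf d Tb := by
    have hC' : matOf d C = (2:ℝ) • matOf d Tb - matOf d Tp - matOf d Tm := by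
      ext i j
      simp only [matOf, Matrix.of_apply, hC, ContinuousLinearMap.coe_sub', Pi.sub_apply,
        ContinuousLinearMap.coe_smul', Pi.smul_apply, inner_sub_right, real_inner_smul_right,
        Matrix.sub_apply, Matrix.smul_apply, smul_eq_mul]
    rw [hC']
    abel
  -- concavity chain
  have step1 : (matOf d Tp).det ^ ((1:ℝ)/d) + (matOf d Tm).det ^ ((1:ℝ)/d)
      ≤ (matOf d Tp + matOf d Tm).det ^ ((1:ℝ)/d) :=
    psd_det_rpow_add_le hd hMpPSD hMmPSD
  have step2 : (matOf d Tp + matOf d Tm).det ^ ((1:ℝ)/d)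
      ≤ ((matOf d Tp + matOf d Tm) + matOf d C).det ^ ((1:ℝ)/d) := by
    have h := psd_det_rpow_add_le hd (hMpPSD.add hMmPSD) hMCPSD
    have h0 : 0 ≤ (matOf d C).det ^ ((1:ℝ)/d) := Real.rpow_nonneg (psd_det_nonneg hMCPSD) _
    linarith
  have step3 : (((2:ℝ) • matOf d Tb).det) ^ ((1:ℝ)/d) = 2 * (matOf d Tb).det ^ ((1:ℝ)/d) := by
    rw [Matrix.det_smul, Fintype.card_fin]
    rw [Real.mul_rpow (by positivity) (psd_det_nonneg hMbPSD)]
    congr 1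
    rw [← Real.rpow_natCast (2:ℝ) d, ← Real.rpow_mul (by norm_num)]
    rw [mul_one_div, div_self (ne_of_gt hdpos), Real.rpow_one]
  have key : (matOf d Tp).det ^ ((1:ℝ)/d) + (matOf d Tm).det ^ ((1:ℝ)/d)
      ≤ 2 * (matOf d Tb).det ^ ((1:ℝ)/d) := by
    calc (matOf d Tp).det ^ ((1:ℝ)/d) + (matOf d Tm).det ^ ((1:ℝ)/d)
        ≤ (matOf d Tp + matOf d Tm).det ^ ((1:ℝ)/d) := step1
      _ ≤ ((matOf d Tp + matOf d Tm) + matOf d C).det ^ ((1:ℝ)/d) := step2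
      _ = (((2:ℝ) • matOf d Tb).det) ^ ((1:ℝ)/d) := by rw [hMatsum]
      _ = 2 * (matOf d Tb).det ^ ((1:ℝ)/d) := step3
  -- translate determinants via the Monge–Ampère equation
  have hMAp := hMA (xbar + ε • ebar) (by simp)
  have hMAm := hMA (xbar - ε • ebar) (by simp)
  have hMAb := hMA xbar (by simp)
  rw [← hTp] at hMAp
  rw [← hTm] at hMAm
  rw [← hTb] at hMAb
  rw [det_matOf, det_matOf, det_matOf, hMAp, hMAm, hMAb, hp, hm] at key
  -- final algebra
  set a := W (gradient φ xbar + δ • ebar) with ha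
  set bb := W (gradient φ xbar - δ • ebar) with hbb
  set w := W (gradient φ xbar) with hw
  set vp := V (xbar + ε • ebar) with hvp
  set vm := V (xbar - ε • ebar) with hvm
  set v0 := V xbar with hv0
  have hvp0 : 0 < vp := hVpos _
  have hvm0 : 0 < vm := hVpos _
  have hv00 : 0 < v0 := hVpos _
  rw [← sub_nonneg]
  have expand : (a - w) * ((vp - v0) / vp) + (bb - w) * ((vm - v0) / vm)
        + v0 * w * ((-1 / vp) + (-1 / vm) - 2 * (-1 / v0))
        - (a + bb - 2 * w)
      = (2 * (w / v0) - (a / vp + bb / vm)) * v0 := by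
    field_simp
    ring
  rw [expand]
  exact mul_nonneg (by linarith) (le_of_lt hv00)
end

section
/- Let d ≥ 1, p > 1, λ > 0, and let W : ℝ^d → ℝ be a function of class C² with D²W(x) ≥ λ⟨x⟩^{p−2} Id for all x ∈ ℝ^d. Then there exists a constant c > 0 (depending only on λ and p) such that for all y ∈ ℝ^d: ⟨y⟩|∇W(y)| ≥ ∇W(y)·y ≥ W(y) − W(0) + c(⟨y⟩^p − 1). -/
open scoped RealInnerProductSpace

/-- The Taylor-formula estimate (3.18): a lower bound on `∇W(y)·y` for
uniformly convex `W`. -/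
theorem taylor_radial_lower_bound
    (d : ℕ) (hd : 1 ≤ d) (p lam : ℝ) (hp : 1 < p) (hlam : 0 < lam)
    (W : EuclideanSpace ℝ (Fin d) → ℝ) (hW2 : ContDiff ℝ 2 W)
    (hWhess : ∀ (x : EuclideanSpace ℝ (Fin d)) (v : EuclideanSpace ℝ (Fin d)),
      lam * Real.sqrt (1 + ‖x‖ ^ 2) ^ (p - 2) * ‖v‖ ^ 2
        ≤ ⟪fderiv ℝ (fun y => gradient W y) x v, v⟫) :
    ∃ c > 0, ∀ y : EuclideanSpace ℝ (Fin d),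
      ⟪gradient W y, y⟫ ≤ Real.sqrt (1 + ‖y‖ ^ 2) * ‖gradient W y‖ ∧
      W y - W 0 + c * (Real.sqrt (1 + ‖y‖ ^ 2) ^ p - 1) ≤ ⟪gradient W y, y⟫ := by
  have hp0 : (0:ℝ) < p := by linarith
  have hgradC : ContDiff ℝ 1 (gradient W) := by
    have h1 : ContDiff ℝ 1 (fderiv ℝ W) := hW2.fderiv_right (by norm_num)
    exact ((InnerProductSpace.toDual ℝ (EuclideanSpace ℝ (Fin d))).symm.contDiff).comp h1
  have hgradD : Differentiable ℝ (gradient W) := hgradC.differentiable (by norm_num)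
  have hWD : Differentiable ℝ W := hW2.differentiable (by norm_num)
  refine ⟨lam / p, div_pos hlam hp0, fun y => ?_⟩
  set r : ℝ := ‖y‖ with hr
  have hr0 : 0 ≤ r := norm_nonneg y
  have hsq : ∀ t : ℝ, (1:ℝ) ≤ 1 + t ^ 2 * r ^ 2 := by
    intro t; nlinarith [sq_nonneg (t*r)]
  constructor
  · have h1 : ‖y‖ ≤ Real.sqrt (1 + ‖y‖ ^ 2) :=
      by nlinarith [Real.sq_sqrt (show (0:ℝ) ≤ 1 + ‖y‖ ^ 2 by positivity),
        Real.sqrt_nonneg (1 + ‖y‖ ^ 2), norm_nonneg y]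
    calc ⟪gradient W y, y⟫ ≤ ‖gradient W y‖ * ‖y‖ := real_inner_le_norm _ _
      _ ≤ ‖gradient W y‖ * Real.sqrt (1 + ‖y‖ ^ 2) :=
          mul_le_mul_of_nonneg_left h1 (norm_nonneg _)
      _ = Real.sqrt (1 + ‖y‖ ^ 2) * ‖gradient W y‖ := mul_comm _ _
  · have hline : ∀ t : ℝ, HasDerivAt (fun s : ℝ => s • y) y t := by
      intro t; simpa using (hasDerivAt_id t).smul_const y
    have hφ : ∀ t : ℝ, HasDerivAt (fun s : ℝ => W (s • y)) (⟪gradient W (t • y), y⟫) t := by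
      intro t
      have hg := (hWD (t • y)).hasGradientAt
      simpa [InnerProductSpace.toDual_apply_apply, Function.comp_def] using hg.hasFDerivAt.comp_hasDerivAt t (hline t)
    have hψ : ∀ t : ℝ, HasDerivAt (fun s : ℝ => ⟪gradient W (s • y), y⟫)
        (⟪fderiv ℝ (gradient W) (t • y) y, y⟫) t := by
      intro t
      have hg : HasDerivAt (fun s : ℝ => gradient W (s • y))
          (fderiv ℝ (gradient W) (t • y) y) t :=
        (hgradD (t • y)).hasFDerivAt.comp_hasDerivAt (l := gradient W) t (hline t)
      simpa using hg.inner ℝ (hasDerivAt_const t y)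
    have hpow : ∀ t : ℝ, HasDerivAt (fun s : ℝ => (1 + s ^ 2 * r ^ 2) ^ (p / 2))
        ((p / 2) * (1 + t ^ 2 * r ^ 2) ^ (p / 2 - 1) * (2 * t * r ^ 2)) t := by
      intro t
      have hbase : HasDerivAt (fun s : ℝ => 1 + s ^ 2 * r ^ 2) (2 * t * r ^ 2) t := by
        have h2 : HasDerivAt (fun s : ℝ => s ^ 2) (2 * t) t := by
          simpa using (hasDerivAt_pow 2 t)
        simpa [mul_comm, mul_assoc] using ((h2.mul_const (r^2)).const_add 1)
      have := hbase.rpow_const (p := p/2) (Or.inl (by nlinarith [hsq t]))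
      simpa [mul_comm, mul_assoc, mul_left_comm] using this
    set F : ℝ → ℝ := fun t => t * ⟪gradient W (t • y), y⟫ - W (t • y)
        - (lam / p) * (1 + t ^ 2 * r ^ 2) ^ (p / 2) with hF
    have hF' : ∀ t : ℝ, HasDerivAt F
        (t * ⟪fderiv ℝ (gradient W) (t • y) y, y⟫
          - lam * t * r ^ 2 * (1 + t ^ 2 * r ^ 2) ^ (p / 2 - 1)) t := by
      intro t
      have h1 := ((hasDerivAt_id t).mul (hψ t)).sub (hφ t)
      have h2 := h1.sub ((hpow t).const_mul (lam / p))
      refine h2.congr_deriv ?_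
      simp only [id_eq, one_mul]
      field_simp
      ring
    have hconv : ∀ s : ℝ, 1 ≤ s → Real.sqrt s ^ (p - 2) = s ^ (p / 2 - 1) := by
      intro s hs
      rw [Real.sqrt_eq_rpow, ← Real.rpow_mul (by linarith : (0:ℝ) ≤ s)]
      congr 1
      ring
    have hnorm : ∀ t : ℝ, ‖t • y‖ ^ 2 = t ^ 2 * r ^ 2 := by
      intro t
      rw [norm_smul, mul_pow, Real.norm_eq_abs, sq_abs]
    have hderiv_nonneg : ∀ t : ℝ, 0 ≤ t →
        0 ≤ t * ⟪fderiv ℝ (gradient W) (t • y) y, y⟫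
          - lam * t * r ^ 2 * (1 + t ^ 2 * r ^ 2) ^ (p / 2 - 1) := by
      intro t ht
      have h := hWhess (t • y) y
      rw [hnorm t, hconv _ (hsq t)] at h
      have h2 : lam * r ^ 2 * (1 + t ^ 2 * r ^ 2) ^ (p / 2 - 1)
          ≤ ⟪fderiv ℝ (gradient W) (t • y) y, y⟫ := by
        calc lam * r ^ 2 * (1 + t ^ 2 * r ^ 2) ^ (p / 2 - 1)
            = lam * (1 + t ^ 2 * r ^ 2) ^ (p / 2 - 1) * r ^ 2 := by ring
          _ ≤ _ := h
      nlinarith [mul_le_mul_of_nonneg_left h2 ht]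
    have hdiff : Differentiable ℝ F := fun t => (hF' t).differentiableAt
    have hmono : MonotoneOn F (Set.Icc (0:ℝ) 1) := by
      apply monotoneOn_of_deriv_nonneg (convex_Icc 0 1) hdiff.continuous.continuousOn
        (hdiff.differentiableOn)
      intro t ht
      rw [interior_Icc] at ht
      rw [(hF' t).deriv]
      exact hderiv_nonneg t ht.1.le
    have hF01 : F 0 ≤ F 1 :=
      hmono (Set.mem_Icc.mpr ⟨le_refl 0, zero_le_one⟩) (Set.mem_Icc.mpr ⟨zero_le_one, le_refl 1⟩)
        zero_le_one
    have hF0 : F 0 = -W 0 - lam / p := by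
      simp [hF, Real.one_rpow]
    have hF1 : F 1 = ⟪gradient W y, y⟫ - W y - (lam / p) * (1 + r ^ 2) ^ (p / 2) := by
      simp [hF]
    have hfinal : Real.sqrt (1 + ‖y‖ ^ 2) ^ p = (1 + r ^ 2) ^ (p / 2) := by
      have h1 : (1:ℝ) ≤ 1 + r ^ 2 := by nlinarith
      rw [← hr, Real.sqrt_eq_rpow, ← Real.rpow_mul (by linarith), one_div_mul_eq_div]
    rw [hfinal]
    rw [hF0, hF1] at hF01
    linarith
end

section
/- Let d ≥ 1, p > 1, λ > 0, B > 0, and let W : ℝ^d → ℝ be a function of class C² with inf_{ℝ^d} W > 0, D²W(x) ≥ λ⟨x⟩^{p−2} Id for all x, and |∇W(x)| ≤ B⟨x⟩^{p−1} for all x. Then there exist constants 0 < c ≤ C such that for every x ∈ ℝ^d: c⟨x⟩^p ≤ W(x) ≤ C⟨x⟩^p and c⟨x⟩^{p−1} ≤ 1 + |∇W(x)| ≤ C⟨x⟩^{p−1}. -/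
open scoped RealInnerProductSpace
open InnerProductSpace Set

private lemma aux_mvt {f f' : ℝ → ℝ} (h : ∀ t, HasDerivAt f (f' t) t) {a b : ℝ} (hab : a < b) :
    ∃ ξ ∈ Set.Ioo a b, f b - f a = f' ξ * (b - a) := by
  obtain ⟨ξ, hξ, he⟩ := exists_hasDerivAt_eq_slope f f' hab
    ((continuous_iff_continuousAt.mpr fun t => (h t).continuousAt).continuousOn)
    (fun t _ => h t)
  refine ⟨ξ, hξ, ?_⟩
  rw [he, div_mul_cancel₀]
  exact sub_ne_zero.mpr hab.ne'

private lemma aux_mono {f f' : ℝ → ℝ} (h : ∀ t, HasDerivAt f (f' t) t)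
    (h' : ∀ t, 0 ≤ f' t) {a b : ℝ} (hab : a ≤ b) : f a ≤ f b := by
  rcases eq_or_lt_of_le hab with rfl | hlt
  · exact le_rfl
  · obtain ⟨ξ, _, he⟩ := aux_mvt h hlt
    nlinarith [h' ξ]

private lemma aux_grad_diff {E : Type*} [NormedAddCommGroup E] [InnerProductSpace ℝ E]
    [CompleteSpace E] (W : E → ℝ) (hW2 : ContDiff ℝ 2 W) :
    Differentiable ℝ (gradient W) := by
  have h1 : ContDiff ℝ 1 (fderiv ℝ W) := hW2.fderiv_right (by norm_num)
  exact fun x => ((toDual ℝ E).symm.differentiable.differentiableAt).comp x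
    (h1.differentiable (by norm_num) x)

private lemma aux_hg {E : Type*} [NormedAddCommGroup E] [InnerProductSpace ℝ E]
    [CompleteSpace E] (W : E → ℝ) (hW2 : ContDiff ℝ 2 W) (x : E) (t : ℝ) :
    HasDerivAt (fun t : ℝ => W (t • x)) ⟪x, gradient W (t • x)⟫ t := by
  have hsm : HasDerivAt (fun t : ℝ => t • x) ((1:ℝ) • x) t :=
    (hasDerivAt_id t).smul_const x
  have hW : HasFDerivAt W (toDual ℝ E (gradient W (t • x))) (t • x) :=
    ((hW2.differentiable (by norm_num) (t • x)).hasGradientAt).hasFDerivAt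
  have := hW.comp_hasDerivAt t hsm
  exact this.congr_deriv (by rw [one_smul, toDual_apply_apply, real_inner_comm])

private lemma aux_hg1 {E : Type*} [NormedAddCommGroup E] [InnerProductSpace ℝ E]
    [CompleteSpace E] (W : E → ℝ) (hW2 : ContDiff ℝ 2 W) (x : E) (t : ℝ) :
    HasDerivAt (fun t : ℝ => ⟪x, gradient W (t • x)⟫)
      ⟪x, fderiv ℝ (fun y => gradient W y) (t • x) x⟫ t := by
  have hsm : HasDerivAt (fun t : ℝ => t • x) ((1:ℝ) • x) t :=
    (hasDerivAt_id t).smul_const x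
  have hgd : HasFDerivAt (gradient W) (fderiv ℝ (fun y => gradient W y) (t • x)) (t • x) :=
    (aux_grad_diff W hW2 (t • x)).hasFDerivAt
  have h1 : HasDerivAt (fun t : ℝ => gradient W (t • x))
      (fderiv ℝ (fun y => gradient W y) (t • x) x) t := by
    exact (hgd.comp_hasDerivAt t hsm).congr_deriv (by rw [one_smul])
  have := ((innerSL ℝ x).hasFDerivAt (x := gradient W (t • x))).comp_hasDerivAt t h1
  exact this

set_option maxHeartbeats 2000000 in
/-- The two-sided power comparison `W ∼ ⟨·⟩^p` and `1+|∇W| ∼ ⟨·⟩^{p-1}`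
established in Section 3.4. -/
theorem power_comparison_of_uniformly_convex
    (d : ℕ) (hd : 1 ≤ d) (p lam B : ℝ) (hp : 1 < p) (hlam : 0 < lam) (hB : 0 < B)
    (W : EuclideanSpace ℝ (Fin d) → ℝ) (hW2 : ContDiff ℝ 2 W)
    (hWinf : ∃ m > 0, ∀ x, m ≤ W x)
    (hWhess : ∀ (x : EuclideanSpace ℝ (Fin d)) (v : EuclideanSpace ℝ (Fin d)),
      lam * Real.sqrt (1 + ‖x‖ ^ 2) ^ (p - 2) * ‖v‖ ^ 2
        ≤ ⟪fderiv ℝ (fun y => gradient W y) x v, v⟫)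
    (hWgrad : ∀ x, ‖gradient W x‖ ≤ B * Real.sqrt (1 + ‖x‖ ^ 2) ^ (p - 1)) :
    ∃ c C : ℝ, 0 < c ∧ c ≤ C ∧ ∀ x : EuclideanSpace ℝ (Fin d),
      c * Real.sqrt (1 + ‖x‖ ^ 2) ^ p ≤ W x ∧
      W x ≤ C * Real.sqrt (1 + ‖x‖ ^ 2) ^ p ∧
      c * Real.sqrt (1 + ‖x‖ ^ 2) ^ (p - 1) ≤ 1 + ‖gradient W x‖ ∧
      1 + ‖gradient W x‖ ≤ C * Real.sqrt (1 + ‖x‖ ^ 2) ^ (p - 1) := by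
  obtain ⟨m, hm, hmW⟩ := hWinf
  have hp1 : 0 < p - 1 := by linarith
  have hp0 : 0 < p := by linarith
  have h2p : (0:ℝ) < (2:ℝ) ^ (-p) := Real.rpow_pos_of_pos two_pos _
  set K : ℝ := lam * (2:ℝ) ^ (-p) / 2 with hKdef
  set K' : ℝ := lam * (2:ℝ) ^ (-p) / 16 with hK'def
  have hKpos : 0 < K := by positivity
  have hK'pos : 0 < K' := by positivity
  set s₀ : ℝ := max 2 ((4 * B / K) ^ (p - 1)⁻¹) with hs₀def
  set s₁ : ℝ := max 2 ((B / K') ^ (p - 1)⁻¹) with hs₁def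
  have hs₀2 : (2:ℝ) ≤ s₀ := le_max_left _ _
  have hs₁2 : (2:ℝ) ≤ s₁ := le_max_left _ _
  have hs₀pos : (0:ℝ) < s₀ := by linarith
  have hs₁pos : (0:ℝ) < s₁ := by linarith
  set cg : ℝ := min (K / 4) (s₀ ^ (-(p - 1))) with hcgdef
  set cW : ℝ := min (K' / 2) (m * s₁ ^ (-p)) with hcWdef
  have hcgpos : 0 < cg := lt_min (by positivity) (Real.rpow_pos_of_pos hs₀pos _)
  have hcWpos : 0 < cW := lt_min (by positivity)
    (mul_pos hm (Real.rpow_pos_of_pos hs₁pos _))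
  set c : ℝ := min cg cW with hcdef
  have hcpos : 0 < c := lt_min hcgpos hcWpos
  set C : ℝ := max (max (W 0 + B) (1 + B)) c with hCdef
  refine ⟨c, C, hcpos, le_max_right _ _, fun x => ?_⟩
  set s : ℝ := Real.sqrt (1 + ‖x‖ ^ 2) with hsdef
  have hsq : s ^ 2 = 1 + ‖x‖ ^ 2 := Real.sq_sqrt (by positivity)
  have hsnn : 0 ≤ s := Real.sqrt_nonneg _
  have hs1 : 1 ≤ s := by nlinarith only [hsq, hsnn, sq_nonneg ‖x‖]
  have hs0 : 0 < s := by linarith only [hs1]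
  have hxs : ‖x‖ ≤ s := by nlinarith only [hsq, hsnn, norm_nonneg x]
  -- derivative along the ray
  have hg : ∀ t, HasDerivAt (fun t : ℝ => W (t • x)) ⟪x, gradient W (t • x)⟫ t :=
    aux_hg W hW2 x
  have hg1 : ∀ t, HasDerivAt (fun t : ℝ => ⟪x, gradient W (t • x)⟫)
      ⟪x, fderiv ℝ (fun y => gradient W y) (t • x) x⟫ t := aux_hg1 W hW2 x
  -- nonnegativity of the second derivative
  have hg2nn : ∀ t : ℝ, 0 ≤ ⟪x, fderiv ℝ (fun y => gradient W y) (t • x) x⟫ := by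
    intro t
    have h := hWhess (t • x) x
    have h0 : (0:ℝ) ≤ lam * Real.sqrt (1 + ‖t • x‖ ^ 2) ^ (p - 2) * ‖x‖ ^ 2 := by positivity
    calc (0:ℝ) ≤ _ := h0
      _ ≤ ⟪fderiv ℝ (fun y => gradient W y) (t • x) x, x⟫ := h
      _ = ⟪x, fderiv ℝ (fun y => gradient W y) (t • x) x⟫ := real_inner_comm _ _
  -- monotonicity of t ↦ ⟪x, ∇W(t•x)⟫
  have hmono : ∀ a b : ℝ, a ≤ b →
      ⟪x, gradient W (a • x)⟫ ≤ ⟪x, gradient W (b • x)⟫ := by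
    intro a b hab
    exact aux_mono hg1 hg2nn hab
  -- quantitative Hessian bound on [1/2, 1]
  have hst : ∀ t : ℝ, t ∈ Icc (1/2 : ℝ) 1 →
      lam * (2:ℝ) ^ (-p) * s ^ (p - 2) * ‖x‖ ^ 2
        ≤ ⟪x, fderiv ℝ (fun y => gradient W y) (t • x) x⟫ := by
    intro t ht
    have h := hWhess (t • x) x
    set st : ℝ := Real.sqrt (1 + ‖t • x‖ ^ 2) with hstdef
    have hstnn : 0 ≤ st := Real.sqrt_nonneg _
    have htx : ‖t • x‖ = |t| * ‖x‖ := by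
      rw [norm_smul, Real.norm_eq_abs]
    have ht1 : |t| ≤ 1 := abs_le.mpr ⟨by linarith only [ht.1], ht.2⟩
    have ht2 : 1/2 ≤ |t| := le_abs.mpr (Or.inl ht.1)
    have htsq : |t| ^ 2 ≤ 1 := by nlinarith only [ht1, abs_nonneg t]
    have htsq2 : 1/4 ≤ |t| ^ 2 := by nlinarith only [ht2, abs_nonneg t]
    have hstle : st ≤ s := by
      apply Real.sqrt_le_sqrt
      rw [htx, mul_pow]
      nlinarith only [htsq, sq_nonneg ‖x‖]
    have hstge : s / 2 ≤ st := by
      rw [hstdef, Real.le_sqrt (by positivity) (by positivity), htx, mul_pow]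
      have hs24 : (s / 2) ^ 2 = (1 + ‖x‖ ^ 2) / 4 := by
        rw [div_pow, hsq]; norm_num
      rw [hs24]
      nlinarith only [htsq2, sq_nonneg ‖x‖]
    have hstpos : 0 < st := by linarith only [hstge, hs0]
    have key : (2:ℝ) ^ (-p) * s ^ (p - 2) ≤ st ^ (p - 2) := by
      rcases le_total p 2 with hple | hpge
      · have h1 : s ^ (p - 2) ≤ st ^ (p - 2) :=
          Real.rpow_le_rpow_of_nonpos hstpos hstle (by linarith only [hple])
        have h2 : (2:ℝ) ^ (-p) ≤ 1 :=
          Real.rpow_le_one_of_one_le_of_nonpos one_le_two (by linarith only [hp0])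
        nlinarith only [h1, h2, h2p, Real.rpow_pos_of_pos hs0 (p - 2)]
      · have h1 : (s / 2) ^ (p - 2) ≤ st ^ (p - 2) :=
          Real.rpow_le_rpow (by positivity) hstge (by linarith only [hpge])
        have h2 : (s / 2) ^ (p - 2) = s ^ (p - 2) / (2:ℝ) ^ (p - 2) :=
          Real.div_rpow hsnn (by norm_num) _
        have h3 : (2:ℝ) ^ (-p) ≤ (2:ℝ) ^ (-(p-2)) :=
          Real.rpow_le_rpow_of_exponent_le one_le_two (by linarith only [hp0])
        have h4 : (2:ℝ) ^ (-(p-2)) = ((2:ℝ) ^ (p-2))⁻¹ := Real.rpow_neg (by norm_num) _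
        have h5 : (0:ℝ) < (2:ℝ) ^ (p - 2) := Real.rpow_pos_of_pos two_pos _
        have h6 : (0:ℝ) ≤ s ^ (p - 2) := (Real.rpow_pos_of_pos hs0 _).le
        calc (2:ℝ) ^ (-p) * s ^ (p - 2) ≤ (2:ℝ) ^ (-(p-2)) * s ^ (p - 2) := by
              nlinarith only [h3, h6]
          _ = s ^ (p - 2) / (2:ℝ) ^ (p - 2) := by rw [h4]; ring
          _ = (s / 2) ^ (p - 2) := h2.symm
          _ ≤ st ^ (p - 2) := h1
    have h7 : lam * ((2:ℝ) ^ (-p) * s ^ (p - 2)) ≤ lam * st ^ (p - 2) :=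
      mul_le_mul_of_nonneg_left key hlam.le
    calc lam * (2:ℝ) ^ (-p) * s ^ (p - 2) * ‖x‖ ^ 2
        ≤ lam * st ^ (p - 2) * ‖x‖ ^ 2 := by nlinarith only [h7, sq_nonneg ‖x‖]
      _ ≤ ⟪fderiv ℝ (fun y => gradient W y) (t • x) x, x⟫ := h
      _ = ⟪x, fderiv ℝ (fun y => gradient W y) (t • x) x⟫ := real_inner_comm _ _
  -- endpoint values
  have hg1_0 : -(B * s) ≤ ⟪x, gradient W ((0:ℝ) • x)⟫ := by
    have h0 : ‖gradient W ((0:ℝ) • x)‖ ≤ B := by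
      have := hWgrad ((0:ℝ) • x)
      simpa [zero_smul, norm_zero, Real.sqrt_one, Real.one_rpow] using this
    have habs := abs_real_inner_le_norm x (gradient W ((0:ℝ) • x))
    have hneg := neg_abs_le ⟪x, gradient W ((0:ℝ) • x)⟫
    nlinarith only [h0, habs, hneg, hxs, hB.le, norm_nonneg x,
      norm_nonneg (gradient W ((0:ℝ) • x)), hs0.le]
  have hg1_1_up : ⟪x, gradient W ((1:ℝ) • x)⟫ ≤ B * s ^ p := by
    have h1 : ⟪x, gradient W ((1:ℝ) • x)⟫ ≤ ‖x‖ * ‖gradient W x‖ := by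
      rw [one_smul]; exact real_inner_le_norm _ _
    have h2 := hWgrad x
    have h3 : s * s ^ (p - 1) = s ^ p := by
      have h := Real.rpow_add hs0 (p - 1) 1
      have h2 : ((p - 1) + 1 : ℝ) = p := by ring
      rw [h2, Real.rpow_one] at h
      rw [mul_comm]
      exact h.symm
    nlinarith only [h1, h2, h3, hxs, norm_nonneg (gradient W x), hs0.le, hB.le,
      Real.rpow_pos_of_pos hs0 (p - 1)]
  have hg1_1_low : ⟪x, gradient W ((1:ℝ) • x)⟫ ≤ ‖gradient W x‖ * s := by
    have h1 : ⟪x, gradient W ((1:ℝ) • x)⟫ ≤ ‖x‖ * ‖gradient W x‖ := by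
      rw [one_smul]; exact real_inner_le_norm _ _
    nlinarith only [h1, hxs, norm_nonneg (gradient W x)]
  -- (A) upper bound for W
  have hA : W x ≤ W 0 + B * s ^ p := by
    obtain ⟨ξ, hξ, he⟩ := aux_mvt hg (by norm_num : (0:ℝ) < 1)
    simp only [zero_smul, one_smul] at he
    have h1 : ⟪x, gradient W (ξ • x)⟫ ≤ ⟪x, gradient W ((1:ℝ) • x)⟫ :=
      hmono ξ 1 hξ.2.le
    linarith only [he, h1, hg1_1_up]
  -- (B) lower bound for the gradient
  have hB1 : K * s ^ (p - 2) * ‖x‖ ^ 2 - B * s ≤ ‖gradient W x‖ * s := by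
    obtain ⟨ξ, hξ, he⟩ := aux_mvt hg1 (by norm_num : (1/2:ℝ) < 1)
    have h1 := hst ξ ⟨hξ.1.le, hξ.2.le⟩
    have h2 : ⟪x, gradient W ((0:ℝ) • x)⟫ ≤ ⟪x, gradient W ((1/2:ℝ) • x)⟫ :=
      hmono 0 (1/2) (by norm_num)
    rw [hKdef]
    linarith only [he, h1, h2, hg1_0, hg1_1_low]
  -- (C) lower bound for W
  have hC1 : m - (B / 4) * s + K' * s ^ (p - 2) * ‖x‖ ^ 2 ≤ W x := by
    obtain ⟨ξ, hξ, he⟩ := aux_mvt hg (by norm_num : (3/4:ℝ) < 1)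
    obtain ⟨η, hη, he2⟩ := aux_mvt hg1 (by norm_num : (1/2:ℝ) < 3/4)
    have h1 := hst η ⟨hη.1.le, by linarith only [hη.2]⟩
    have h2 : ⟪x, gradient W ((0:ℝ) • x)⟫ ≤ ⟪x, gradient W ((1/2:ℝ) • x)⟫ :=
      hmono 0 (1/2) (by norm_num)
    have h3 : ⟪x, gradient W ((3/4:ℝ) • x)⟫ ≤ ⟪x, gradient W (ξ • x)⟫ :=
      hmono (3/4) ξ hξ.1.le
    have h4 : m ≤ W ((3/4:ℝ) • x) := hmW _
    simp only [one_smul] at he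
    rw [hK'def]
    linarith only [he, he2, h1, h2, h3, h4, hg1_0]
  -- power identities
  have hsp : 0 < s ^ p := Real.rpow_pos_of_pos hs0 _
  have hsp1 : 0 < s ^ (p - 1) := Real.rpow_pos_of_pos hs0 _
  have hsp2 : 0 < s ^ (p - 2) := Real.rpow_pos_of_pos hs0 _
  have hid1 : s ^ (p - 2) * s ^ 2 = s ^ p := by
    have h := Real.rpow_add hs0 (p - 2) 2
    have h2 : ((p - 2) + 2 : ℝ) = p := by ring
    rw [h2, show ((2:ℝ)) = ((2:ℕ):ℝ) by norm_num, Real.rpow_natCast] at h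
    exact h.symm
  have hid2 : s ^ (p - 1) * s = s ^ p := by
    have h := Real.rpow_add hs0 (p - 1) 1
    have h2 : ((p - 1) + 1 : ℝ) = p := by ring
    rw [h2, Real.rpow_one] at h
    exact h.symm
  have hone_le_sp : 1 ≤ s ^ p := Real.one_le_rpow hs1 hp0.le
  have hone_le_sp1 : 1 ≤ s ^ (p - 1) := Real.one_le_rpow hs1 hp1.le
  have hW0 : 0 < W 0 := lt_of_lt_of_le hm (hmW 0)
  have hxsq : (‖x‖:ℝ) ^ 2 = s ^ 2 - 1 := by linarith only [hsq]
  refine ⟨?_, ?_, ?_, ?_⟩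
  · -- c * s^p ≤ W x
    have hcW' : c ≤ cW := min_le_right _ _
    rcases le_total s₁ s with hcase | hcase
    · -- large s
      have hK'2 : c ≤ K' / 2 := hcW'.trans (min_le_left _ _)
      have hspow : B / K' ≤ s ^ (p - 1) := by
        have h1 : ((B / K') ^ (p - 1)⁻¹ : ℝ) ≤ s := le_trans (le_max_right _ _) hcase
        calc B / K' = ((B / K') ^ (p - 1)⁻¹) ^ (p - 1) :=
              (Real.rpow_inv_rpow (by positivity) hp1.ne').symm
          _ ≤ s ^ (p - 1) := Real.rpow_le_rpow (by positivity) h1 hp1.le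
      have h2 : B ≤ K' * s ^ (p - 1) := by
        rw [div_le_iff₀ hK'pos] at hspow
        linarith only [hspow]
      have hb1 : (B / 4) * s ≤ (K' / 4) * s ^ p := by
        have h5 : B * s ≤ (K' * s ^ (p - 1)) * s := mul_le_mul_of_nonneg_right h2 hsnn
        rw [mul_assoc, hid2] at h5
        linarith only [h5]
      have hb2 : K' * s ^ (p - 2) ≤ (K' / 4) * s ^ p := by
        have h4 : (4:ℝ) ≤ s ^ 2 := by nlinarith only [hcase, hs₁2, hsnn]
        have h5 : s ^ (p - 2) * 4 ≤ s ^ (p - 2) * s ^ 2 := by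
          nlinarith only [h4, hsp2]
        rw [hid1] at h5
        nlinarith only [h5, hK'pos]
      have hxx : K' * s ^ (p - 2) * ‖x‖ ^ 2 = K' * s ^ p - K' * s ^ (p - 2) := by
        rw [hxsq]
        linear_combination K' * hid1
      rw [hxx] at hC1
      have hfin : (K' / 2) * s ^ p ≤ W x := by
        linarith only [hC1, hb1, hb2, hm]
      calc c * s ^ p ≤ (K' / 2) * s ^ p := by nlinarith only [hK'2, hsp]
        _ ≤ W x := hfin
    · -- small s
      have hc2 : c ≤ m * s₁ ^ (-p) := hcW'.trans (min_le_right _ _)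
      have h1 : s ^ p ≤ s₁ ^ p := Real.rpow_le_rpow hsnn hcase hp0.le
      have h2 : s₁ ^ (-p) = (s₁ ^ p)⁻¹ := Real.rpow_neg hs₁pos.le _
      have h3 : 0 < s₁ ^ p := Real.rpow_pos_of_pos hs₁pos _
      have h5 : (s₁ ^ p)⁻¹ * s ^ p ≤ 1 := by
        rw [inv_mul_le_iff₀ h3]
        linarith only [h1]
      have h4 : m * s₁ ^ (-p) * s ^ p ≤ m := by
        rw [h2, mul_assoc]
        exact (mul_le_mul_of_nonneg_left h5 hm.le).trans_eq (mul_one m)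
      calc c * s ^ p ≤ m * s₁ ^ (-p) * s ^ p := by nlinarith only [hc2, hsp]
        _ ≤ m := h4
        _ ≤ W x := hmW x
  · -- W x ≤ C * s^p
    have hCW : W 0 + B ≤ C := le_trans (le_max_left _ _) (le_max_left _ _)
    calc W x ≤ W 0 + B * s ^ p := hA
      _ ≤ (W 0 + B) * s ^ p := by nlinarith only [hone_le_sp, hW0]
      _ ≤ C * s ^ p := by nlinarith only [hCW, hsp]
  · -- c * s^(p-1) ≤ 1 + ‖∇W x‖
    have hcg' : c ≤ cg := min_le_left _ _
    have hgnn : (0:ℝ) ≤ ‖gradient W x‖ := norm_nonneg _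
    rcases le_total s₀ s with hcase | hcase
    · -- large s
      have hK4 : c ≤ K / 4 := hcg'.trans (min_le_left _ _)
      have hspow : 4 * B / K ≤ s ^ (p - 1) := by
        have h1 : ((4 * B / K) ^ (p - 1)⁻¹ : ℝ) ≤ s := le_trans (le_max_right _ _) hcase
        calc 4 * B / K = ((4 * B / K) ^ (p - 1)⁻¹) ^ (p - 1) :=
              (Real.rpow_inv_rpow (by positivity) hp1.ne').symm
          _ ≤ s ^ (p - 1) := Real.rpow_le_rpow (by positivity) h1 hp1.le
      have h2 : B ≤ (K / 4) * s ^ (p - 1) := by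
        rw [div_le_iff₀ hKpos] at hspow
        linarith only [hspow]
      have hb1 : B * s ≤ (K / 4) * s ^ p := by
        have h5 : B * s ≤ ((K / 4) * s ^ (p - 1)) * s := mul_le_mul_of_nonneg_right h2 hsnn
        rw [mul_assoc, hid2] at h5
        linarith only [h5]
      have hb2 : K * s ^ (p - 2) ≤ (K / 4) * s ^ p := by
        have h4 : (4:ℝ) ≤ s ^ 2 := by nlinarith only [hcase, hs₀2, hsnn]
        have h5 : s ^ (p - 2) * 4 ≤ s ^ (p - 2) * s ^ 2 := by
          nlinarith only [h4, hsp2]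
        rw [hid1] at h5
        nlinarith only [h5, hKpos]
      have hxx : K * s ^ (p - 2) * ‖x‖ ^ 2 = K * s ^ p - K * s ^ (p - 2) := by
        rw [hxsq]
        linear_combination K * hid1
      rw [hxx] at hB1
      have hbig : ((K / 4) * s ^ (p - 1)) * s ≤ (1 + ‖gradient W x‖) * s := by
        rw [mul_assoc, hid2]
        nlinarith only [hB1, hb1, hb2, hs0.le, hsp, hKpos]
      have hfin : (K / 4) * s ^ (p - 1) ≤ 1 + ‖gradient W x‖ :=
        (mul_le_mul_iff_of_pos_right hs0).mp hbig
      calc c * s ^ (p - 1) ≤ (K / 4) * s ^ (p - 1) := by nlinarith only [hK4, hsp1]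
        _ ≤ 1 + ‖gradient W x‖ := hfin
    · -- small s
      have hc2 : c ≤ s₀ ^ (-(p - 1)) := hcg'.trans (min_le_right _ _)
      have h1 : s ^ (p - 1) ≤ s₀ ^ (p - 1) := Real.rpow_le_rpow hsnn hcase hp1.le
      have h2 : s₀ ^ (-(p - 1)) = (s₀ ^ (p - 1))⁻¹ := Real.rpow_neg hs₀pos.le _
      have h3 : 0 < s₀ ^ (p - 1) := Real.rpow_pos_of_pos hs₀pos _
      have h4 : s₀ ^ (-(p - 1)) * s ^ (p - 1) ≤ 1 := by
        rw [h2, inv_mul_le_iff₀ h3]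
        linarith only [h1]
      calc c * s ^ (p - 1) ≤ s₀ ^ (-(p - 1)) * s ^ (p - 1) := by nlinarith only [hc2, hsp1]
        _ ≤ 1 := h4
        _ ≤ 1 + ‖gradient W x‖ := by linarith only [hgnn]
  · -- upper bound for gradient
    have hCB : 1 + B ≤ C := le_trans (le_max_right _ _) (le_max_left _ _)
    calc 1 + ‖gradient W x‖ ≤ 1 + B * s ^ (p - 1) := by linarith only [hWgrad x]
      _ ≤ (1 + B) * s ^ (p - 1) := by nlinarith only [hone_le_sp1, hB.le]
      _ ≤ C * s ^ (p - 1) := by nlinarith only [hCB, hsp1]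
end

section
/- Let d ≥ 1, p > 1, λ > 0, B > 0, and let W : ℝ^d → ℝ be a function of class C² with inf_{ℝ^d} W > 0, D²W(x) ≥ λ⟨x⟩^{p−2} Id for all x, and |∇W(x)| ≤ B⟨x⟩^{p−1} for all x. Then liminf_{|y|→∞} W(y)/|y|^p > 0 and liminf_{|y|→∞} (∇W(y)·y)/W(y) > 1. -/
open Filter
open scoped RealInnerProductSpace

lemma aux_sqrt_le {s : ℝ} (hs : 0 ≤ s) : Real.sqrt (1 + s ^ 2) ≤ 1 + s := by
  rw [show (1:ℝ) + s = Real.sqrt ((1+s)^2) by rw [Real.sqrt_sq (by linarith)]]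
  apply Real.sqrt_le_sqrt; nlinarith

lemma aux_sqrt_ge {s : ℝ} (hs : 0 ≤ s) : (1 + s) / Real.sqrt 2 ≤ Real.sqrt (1 + s ^ 2) := by
  have h2 : Real.sqrt 2 ^ 2 = 2 := Real.sq_sqrt (by norm_num)
  rw [div_le_iff₀ (by positivity)]
  nlinarith [sq_nonneg (1-s), Real.sq_sqrt (by positivity : (0:ℝ) ≤ 1 + s^2),
    Real.sqrt_nonneg (1+s^2), Real.sqrt_nonneg 2,
    mul_nonneg (Real.sqrt_nonneg (1+s^2)) (Real.sqrt_nonneg 2),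
    sq_nonneg (Real.sqrt (1+s^2) * Real.sqrt 2 - (1+s))]

lemma aux_c_bound (q : ℝ) {s : ℝ} (hs : 0 ≤ s) :
    (min 1 ((2:ℝ) ^ (-q/2))) * (1+s) ^ q ≤ Real.sqrt (1 + s ^ 2) ^ q := by
  rcases le_or_gt 0 q with hq | hq
  · have h1 : ((1+s)/Real.sqrt 2) ^ q ≤ Real.sqrt (1 + s^2) ^ q :=
      Real.rpow_le_rpow (by positivity) (aux_sqrt_ge hs) hq
    have h2 : ((1+s)/Real.sqrt 2) ^ q = (1+s) ^ q * (2:ℝ) ^ (-q/2) := by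
      rw [Real.div_rpow (by linarith) (Real.sqrt_nonneg 2), Real.sqrt_eq_rpow,
        ← Real.rpow_mul (by norm_num : (0:ℝ) ≤ 2)]
      rw [show (1/2 : ℝ) * q = q/2 by ring, div_eq_mul_inv, ← Real.rpow_neg (by norm_num : (0:ℝ) ≤ 2), neg_div']
    calc (min 1 ((2:ℝ) ^ (-q/2))) * (1+s) ^ q ≤ (2:ℝ) ^ (-q/2) * (1+s) ^ q := by
          apply mul_le_mul_of_nonneg_right (min_le_right _ _) (by positivity)
      _ = ((1+s)/Real.sqrt 2) ^ q := by rw [h2]; ring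
      _ ≤ _ := h1
  · have h1 : (1+s) ^ q ≤ Real.sqrt (1 + s^2) ^ q :=
      Real.rpow_le_rpow_of_nonpos (by positivity) (aux_sqrt_le hs) hq.le
    calc (min 1 ((2:ℝ) ^ (-q/2))) * (1+s) ^ q ≤ 1 * (1+s) ^ q := by
          apply mul_le_mul_of_nonneg_right (min_le_left _ _) (by positivity)
      _ ≤ _ := by rw [one_mul]; exact h1

variable {E : Type*} [NormedAddCommGroup E] [InnerProductSpace ℝ E] [CompleteSpace E]

lemma grad_diff {W : E → ℝ} (hW2 : ContDiff ℝ 2 W) (x : E) :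
    DifferentiableAt ℝ (fun z => gradient W z) x := by
  have h1 : ContDiff ℝ 1 (fderiv ℝ W) := hW2.fderiv_right (by norm_num)
  have : (fun z => gradient W z)
      = fun z => (InnerProductSpace.toDual ℝ E).symm (fderiv ℝ W z) := rfl
  rw [this]
  exact ((InnerProductSpace.toDual ℝ E).symm.differentiable.comp (h1.differentiable one_ne_zero)) x

lemma hasDeriv_g {W : E → ℝ} (hW2 : ContDiff ℝ 2 W) (y : E) (t : ℝ) :
    HasDerivAt (fun t : ℝ => W (t • y)) ⟪gradient W (t • y), y⟫ t := by
  have hdiff : DifferentiableAt ℝ W (t • y) :=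
    (hW2.differentiable (by norm_num)) _
  have hg : HasGradientAt W (gradient W (t • y)) (t • y) := hdiff.hasGradientAt
  have hline : HasDerivAt (fun t : ℝ => t • y) y t := by
    simpa using (hasDerivAt_id t).smul_const y
  have := hg.hasFDerivAt.comp_hasDerivAt t hline
  simpa [InnerProductSpace.toDual_apply_apply, Function.comp_def] using this

lemma hasDeriv_g' {W : E → ℝ} (hW2 : ContDiff ℝ 2 W) (y : E) (t : ℝ) :
    HasDerivAt (fun t : ℝ => ⟪gradient W (t • y), y⟫)
      ⟪fderiv ℝ (fun z => gradient W z) (t • y) y, y⟫ t := by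
  have hline : HasDerivAt (fun t : ℝ => t • y) y t := by
    simpa using (hasDerivAt_id t).smul_const y
  have hG : HasFDerivAt (fun z => gradient W z)
      (fderiv ℝ (fun z => gradient W z) (t • y)) (t • y) :=
    (grad_diff hW2 (t • y)).hasFDerivAt
  have hcomp : HasDerivAt (fun t : ℝ => gradient W (t • y))
      (fderiv ℝ (fun z => gradient W z) (t • y) y) t :=
    by have := hG.comp_hasDerivAt t hline; exact this
  simpa using hcomp.inner ℝ (hasDerivAt_const t y)

noncomputable def cc (p : ℝ) : ℝ := min 1 ((2:ℝ) ^ (-(p-2)/2))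

lemma cc_pos (p : ℝ) : 0 < cc p := lt_min one_pos (Real.rpow_pos_of_pos two_pos _)

lemma slope_bounds {φ φ' : ℝ → ℝ}
    (hφ : ∀ t ∈ Set.Icc (0:ℝ) 1, HasDerivAt φ (φ' t) t)
    (hmono : MonotoneOn φ' (Set.Icc 0 1)) :
    φ' 0 ≤ φ 1 - φ 0 ∧ φ 1 - φ 0 ≤ φ' 1 := by
  obtain ⟨c, hc, hceq⟩ := exists_hasDerivAt_eq_slope φ φ' one_pos
    (fun t ht => (hφ t ht).continuousAt.continuousWithinAt)
    (fun t ht => hφ t (Set.mem_Icc_of_Ioo ht))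
  rw [sub_zero, div_one] at hceq
  constructor
  · rw [← hceq]
    exact hmono (Set.left_mem_Icc.2 one_pos.le) (Set.mem_Icc_of_Ioo hc) hc.1.le
  · rw [← hceq]
    exact hmono (Set.mem_Icc_of_Ioo hc) (Set.right_mem_Icc.2 one_pos.le) hc.2.le

lemma mono_on_of_deriv {φ' φ'' : ℝ → ℝ}
    (h : ∀ t ∈ Set.Icc (0:ℝ) 1, HasDerivAt φ' (φ'' t) t)
    (hnn : ∀ t ∈ Set.Icc (0:ℝ) 1, 0 ≤ φ'' t) : MonotoneOn φ' (Set.Icc 0 1) := by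
  apply monotoneOn_of_deriv_nonneg (convex_Icc 0 1)
    (fun t ht => (h t ht).continuousAt.continuousWithinAt)
  · intro t ht
    rw [interior_Icc] at ht
    exact (h t (Set.mem_Icc_of_Ioo ht)).differentiableAt.differentiableWithinAt
  · intro t ht
    rw [interior_Icc] at ht
    rw [(h t (Set.mem_Icc_of_Ioo ht)).deriv]
    exact hnn t (Set.mem_Icc_of_Ioo ht)

lemma master {E : Type*} [NormedAddCommGroup E] [InnerProductSpace ℝ E] [CompleteSpace E]
    (p lam B : ℝ) (hp : 1 < p) (hlam : 0 < lam) (hB : 0 < B)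
    (W : E → ℝ) (hW2 : ContDiff ℝ 2 W)
    (hWhess : ∀ x v, lam * Real.sqrt (1 + ‖x‖ ^ 2) ^ (p - 2) * ‖v‖ ^ 2
        ≤ ⟪fderiv ℝ (fun y => gradient W y) x v, v⟫)
    (hWgrad : ∀ x, ‖gradient W x‖ ≤ B * Real.sqrt (1 + ‖x‖ ^ 2) ^ (p - 1))
    (y : E) :
    (W 0 - B * ‖y‖ + (lam * cc p / (p*(p-1))) * ((1+‖y‖)^p - 1 - p*‖y‖) ≤ W y)
  ∧ (W y - W 0 + (lam * cc p / (p*(p-1))) * (p*‖y‖*(1+‖y‖)^(p-1) - (1+‖y‖)^p + 1)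
      ≤ ⟪gradient W y, y⟫)
  ∧ (W y ≤ W 0 + B * (1+‖y‖)^(p-1) * ‖y‖) := by
  set r := ‖y‖ with hrdef
  have hr : 0 ≤ r := norm_nonneg y
  set A := lam * cc p / (p*(p-1)) with hAdef
  have hppos : 0 < p := by linarith
  have hp1 : 0 < p - 1 := by linarith
  have hA : 0 < A := by
    apply div_pos (mul_pos hlam (cc_pos p)) (by positivity)
  set g : ℝ → ℝ := fun t => W (t • y) with hgdef
  set g' : ℝ → ℝ := fun t => ⟪gradient W (t • y), y⟫ with hg'def
  set g'' : ℝ → ℝ := fun t => ⟪fderiv ℝ (fun z => gradient W z) (t • y) y, y⟫ with hg''def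
  set F : ℝ → ℝ := fun t => A * (1 + t*r) ^ p with hFdef
  set F' : ℝ → ℝ := fun t => A * (r * p * (1 + t*r) ^ (p-1)) with hF'def
  set F'' : ℝ → ℝ := fun t => A * (r * p * (r * (p-1) * (1 + t*r) ^ (p-1-1))) with hF''def
  have hg : ∀ t, HasDerivAt g (g' t) t := hasDeriv_g hW2 y
  have hg' : ∀ t, HasDerivAt g' (g'' t) t := hasDeriv_g' hW2 y
  have hbase : ∀ t ∈ Set.Icc (0:ℝ) 1, (0:ℝ) < 1 + t * r := by
    intro t ht; nlinarith [ht.1, ht.2]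
  have hu : ∀ t : ℝ, HasDerivAt (fun t : ℝ => 1 + t * r) r t := by
    intro t; simpa using ((hasDerivAt_id t).mul_const r).const_add 1
  have hF : ∀ t ∈ Set.Icc (0:ℝ) 1, HasDerivAt F (F' t) t := by
    intro t ht
    exact ((hu t).rpow_const (Or.inl (hbase t ht).ne')).const_mul A
  have hF' : ∀ t ∈ Set.Icc (0:ℝ) 1, HasDerivAt F' (F'' t) t := by
    intro t ht
    exact (((hu t).rpow_const (Or.inl (hbase t ht).ne')).const_mul (r * p)).const_mul A
  -- second derivative comparison
  have hcomp : ∀ t ∈ Set.Icc (0:ℝ) 1, F'' t ≤ g'' t := by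
    intro t ht
    have hty : ‖t • y‖ = t * r := by
      rw [norm_smul, Real.norm_eq_abs, abs_of_nonneg ht.1]
    have h1 := hWhess (t • y) y
    have h2 : cc p * (1 + t*r) ^ (p-2) ≤ Real.sqrt (1 + ‖t • y‖ ^ 2) ^ (p-2) := by
      rw [hty]
      simpa [cc, neg_div] using aux_c_bound (p - 2) (mul_nonneg ht.1 hr)
    have h3 : lam * (cc p * (1 + t*r) ^ (p-2)) * ‖y‖ ^ 2
        ≤ lam * Real.sqrt (1 + ‖t • y‖ ^ 2) ^ (p-2) * ‖y‖ ^ 2 := by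
      have := mul_le_mul_of_nonneg_left h2 hlam.le
      exact mul_le_mul_of_nonneg_right this (by positivity)
    refine le_trans ?_ (le_trans h3 h1)
    have hAe : A * (p * (p-1)) = lam * cc p := by
      rw [hAdef]; field_simp
    have hFe : F'' t = A * (p * (p-1)) * ((1 + t*r) ^ (p-2) * r^2) := by
      simp only [hF''def]
      rw [show p - 1 - 1 = p - 2 by ring]; ring
    have hy2 : ‖y‖^2 = r^2 := rfl
    rw [hFe, hAe]
    rw [hy2] at *
    nlinarith [Real.rpow_nonneg (le_of_lt (hbase t ht)) (p-2), sq_nonneg r,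
      mul_pos hlam (cc_pos p)]
  -- convexity conclusions
  have hφ : ∀ t ∈ Set.Icc (0:ℝ) 1, HasDerivAt (fun t => g t - F t) (g' t - F' t) t :=
    fun t ht => (hg t).sub (hF t ht)
  have hφ' : ∀ t ∈ Set.Icc (0:ℝ) 1, HasDerivAt (fun t => g' t - F' t) (g'' t - F'' t) t :=
    fun t ht => (hg' t).sub (hF' t ht)
  have hmono : MonotoneOn (fun t => g' t - F' t) (Set.Icc 0 1) :=
    mono_on_of_deriv hφ' (fun t ht => sub_nonneg.2 (hcomp t ht))
  obtain ⟨hlo, hhi⟩ := slope_bounds hφ hmono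
  have hg0 : g 0 = W 0 := by simp [hgdef]
  have hg1 : g 1 = W y := by simp [hgdef]
  have hg'0 : g' 0 = ⟪gradient W 0, y⟫ := by simp [hg'def]
  have hg'1 : g' 1 = ⟪gradient W y, y⟫ := by simp [hg'def]
  have hF0 : F 0 = A := by simp [hFdef]
  have hF1 : F 1 = A * (1+r) ^ p := by simp [hFdef]
  have hF'0 : F' 0 = A * (r * p) := by simp [hF'def]
  have hF'1 : F' 1 = A * (r * p * (1+r) ^ (p-1)) := by simp [hF'def]
  rw [hg0, hg1, hg'0, hF0, hF1, hF'0] at hlo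
  rw [hg0, hg1, hg'1, hF0, hF1, hF'1] at hhi
  have hinner0 : -(B * r) ≤ ⟪gradient W 0, y⟫ := by
    have h1 := abs_real_inner_le_norm (gradient W (0:E)) y
    have h2 := hWgrad (0:E)
    have h3 : Real.sqrt (1 + ‖(0:E)‖ ^ 2) ^ (p-1) = 1 := by
      simp [Real.sqrt_one]
    rw [h3, mul_one] at h2
    have h4 : |⟪gradient W (0:E), y⟫| ≤ B * r :=
      h1.trans (mul_le_mul_of_nonneg_right h2 hr)
    linarith [neg_abs_le ⟪gradient W (0:E), y⟫]
  refine ⟨?_, ?_, ?_⟩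
  · have hexp : A * ((1+r)^p - 1 - p*r) = A * (1+r)^p - A - A * (r * p) := by ring
    rw [hexp]; linarith
  · have hexp : A * (p*r*(1+r)^(p-1) - (1+r)^p + 1)
        = A * (r * p * (1+r)^(p-1)) - A * (1+r)^p + A := by ring
    rw [hexp]; linarith
  · obtain ⟨ξ, hξ, hξeq⟩ := exists_hasDerivAt_eq_slope g g' one_pos
      (fun t _ => (hg t).continuousAt.continuousWithinAt) (fun t _ => hg t)
    rw [sub_zero, div_one, hg0, hg1] at hξeq
    have hξ0 : 0 ≤ ξ := hξ.1.le
    have hξ1 : ξ ≤ 1 := hξ.2.le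
    have hty : ‖ξ • y‖ = ξ * r := by
      rw [norm_smul, Real.norm_eq_abs, abs_of_nonneg hξ0]
    have h1 : g' ξ ≤ ‖gradient W (ξ • y)‖ * r := real_inner_le_norm _ _
    have h2 : Real.sqrt (1 + ‖ξ • y‖ ^ 2) ^ (p-1) ≤ (1+r) ^ (p-1) := by
      apply Real.rpow_le_rpow (Real.sqrt_nonneg _) _ (by linarith)
      refine (aux_sqrt_le (by positivity : (0:ℝ) ≤ ‖ξ • y‖)).trans ?_
      rw [hty]
      nlinarith
    have h3 : ‖gradient W (ξ • y)‖ ≤ B * (1+r) ^ (p-1) :=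
      (hWgrad _).trans (mul_le_mul_of_nonneg_left h2 hB.le)
    have h4 : g' ξ ≤ B * (1+r) ^ (p-1) * r :=
      h1.trans (mul_le_mul_of_nonneg_right h3 hr)
    linarith

lemma rpow_root_le {K r q : ℝ} (hK : 1 ≤ K) (hq : 0 < q) (hr : K ^ (1/q : ℝ) ≤ r) :
    K ≤ r ^ q := by
  have h0 : (0:ℝ) ≤ K ^ (1/q : ℝ) := Real.rpow_nonneg (by linarith) _
  calc K = (K ^ (1/q : ℝ)) ^ q := by
        rw [← Real.rpow_mul (by linarith), one_div, inv_mul_cancel₀ hq.ne', Real.rpow_one]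
    _ ≤ r ^ q := Real.rpow_le_rpow h0 hr hq.le

set_option maxHeartbeats 1000000 in
/-- Verification (Section 3.4) that the hypotheses of Theorem 1.2 on `W` imply
the growth conditions (1.3) of Theorem 1.1. -/
theorem growth_conditions_of_uniformly_convex
    (d : ℕ) (hd : 1 ≤ d) (p lam B : ℝ) (hp : 1 < p) (hlam : 0 < lam) (hB : 0 < B)
    (W : EuclideanSpace ℝ (Fin d) → ℝ) (hW2 : ContDiff ℝ 2 W)
    (hWinf : ∃ m > 0, ∀ x, m ≤ W x)
    (hWhess : ∀ (x : EuclideanSpace ℝ (Fin d)) (v : EuclideanSpace ℝ (Fin d)),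
      lam * Real.sqrt (1 + ‖x‖ ^ 2) ^ (p - 2) * ‖v‖ ^ 2
        ≤ ⟪fderiv ℝ (fun y => gradient W y) x v, v⟫)
    (hWgrad : ∀ x, ‖gradient W x‖ ≤ B * Real.sqrt (1 + ‖x‖ ^ 2) ^ (p - 1)) :
    0 < liminf (fun y => W y / ‖y‖ ^ p)
      (cocompact (EuclideanSpace ℝ (Fin d))) ∧
    1 < liminf (fun y => ⟪gradient W y, y⟫ / W y)
      (cocompact (EuclideanSpace ℝ (Fin d))) := by
  haveI : Nontrivial (EuclideanSpace ℝ (Fin d)) := by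
    refine ⟨⟨EuclideanSpace.single ⟨0, hd⟩ 1, 0, fun h => one_ne_zero (α := ℝ) ?_⟩⟩
    have := congrArg norm h
    rwa [EuclideanSpace.norm_single, norm_one, norm_zero] at this
  obtain ⟨m, hm, hWm⟩ := hWinf
  have hmaster := master p lam B hp hlam hB W hW2 hWhess hWgrad
  have hp1 : (0:ℝ) < p - 1 := by linarith
  have hppos : (0:ℝ) < p := by linarith
  set A := lam * cc p / (p*(p-1)) with hAdef
  have hA : 0 < A := div_pos (mul_pos hlam (cc_pos p)) (by nlinarith)
  have hW0 : 0 < W 0 := lt_of_lt_of_le hm (hWm 0)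
  set C₁ := B + A * p with hC₁def
  have hC₁ : 0 < C₁ := by positivity
  set C₂ := W 0 + B * (2:ℝ) ^ (p-1) with hC₂def
  have hC₂ : 0 < C₂ := by positivity
  set K₁ := max 1 (2*(C₁+A)/A) with hK₁def
  set K₂ := max 1 (4*(W 0)/(A*(p-1))) with hK₂def
  set R := max (max 1 (2/(p-1))) (max (K₁ ^ (1/(p-1) : ℝ)) (K₂ ^ (1/p : ℝ))) with hRdef
  have hR1 : (1:ℝ) ≤ R := le_trans (le_max_left _ _) (le_max_left _ _)
  have hev : ∀ᶠ y : EuclideanSpace ℝ (Fin d) in cocompact (EuclideanSpace ℝ (Fin d)),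
      R ≤ ‖y‖ := tendsto_norm_cocompact_atTop.eventually_ge_atTop R
  -- pointwise consequences for ‖y‖ ≥ R
  have key : ∀ y : EuclideanSpace ℝ (Fin d), R ≤ ‖y‖ →
      (A/2) * ‖y‖ ^ p ≤ W y ∧ W y ≤ C₂ * ‖y‖ ^ p ∧
      1 + (A*(p-1)/4)/C₂ ≤ ⟪gradient W y, y⟫ / W y ∧
      ⟪gradient W y, y⟫ / W y ≤ B * (2:ℝ)^(p-1) / (A/2) := by
    intro y hy
    obtain ⟨hm1, hm2, hm3⟩ := hmaster y
    set r := ‖y‖ with hrdef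
    have h1r : (1:ℝ) ≤ r := le_trans hR1 hy
    have hr0 : (0:ℝ) < r := by linarith
    have h2r : 2/(p-1) ≤ r := le_trans (le_trans (le_max_right _ _) (le_max_left _ _)) hy
    have hK₁r : 2*(C₁+A)/A ≤ r ^ (p-1) :=
      le_trans (le_max_right _ _) (rpow_root_le (le_max_left _ _) hp1
        (le_trans (le_trans (le_max_left _ _) (le_max_right _ _)) hy))
    have hK₂r : 4*(W 0)/(A*(p-1)) ≤ r ^ p :=
      le_trans (le_max_right _ _) (rpow_root_le (le_max_left _ _) hppos
        (le_trans (le_trans (le_max_right _ _) (le_max_right _ _)) hy))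
    have hrp_pos : (0:ℝ) < r ^ p := Real.rpow_pos_of_pos hr0 p
    have hrp1_pos : (0:ℝ) < r ^ (p-1) := Real.rpow_pos_of_pos hr0 (p-1)
    have hsplit : r ^ p = r ^ (p-1) * r := by
      rw [show p = p - 1 + 1 by ring, Real.rpow_add_one hr0.ne']; ring_nf
    have h1rp : (1:ℝ) ≤ r ^ p := Real.one_le_rpow h1r hppos.le
    have hbound12 : (1+r) ^ (p-1) ≤ (2:ℝ)^(p-1) * r ^ (p-1) := by
      rw [← Real.mul_rpow (by norm_num) hr0.le]
      exact Real.rpow_le_rpow (by linarith) (by linarith) hp1.le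
    have hrple : r ^ p ≤ (1+r) ^ p := Real.rpow_le_rpow hr0.le (by linarith) hppos.le
    have hWypos : 0 < W y := lt_of_lt_of_le hm (hWm y)
    -- upper bound on W y
    have hWu : W y ≤ C₂ * r ^ p := by
      have hu1 : B * (1+r)^(p-1) * r ≤ B * ((2:ℝ)^(p-1) * r^(p-1)) * r :=
        mul_le_mul_of_nonneg_right (mul_le_mul_of_nonneg_left hbound12 hB.le) hr0.le
      have hu2 : B * ((2:ℝ)^(p-1) * r^(p-1)) * r = B * (2:ℝ)^(p-1) * r ^ p := by
        rw [hsplit]; ring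
      have hu3 : W 0 ≤ W 0 * r ^ p := le_mul_of_one_le_right hW0.le h1rp
      rw [hC₂def]; nlinarith
    -- lower bound on W y
    have hWl : (A/2) * r ^ p ≤ W y := by
      have hstep : A * (r^p - 1 - p*r) ≤ A * ((1+r)^p - 1 - p*r) := by
        have := mul_le_mul_of_nonneg_left (by linarith : r^p - 1 - p*r ≤ (1+r)^p - 1 - p*r) hA.le
        linarith
      have hclaim : (C₁ + A) * r ≤ (A/2) * r^p := by
        have h4 : (2*(C₁+A)/A) * r ≤ r ^ (p-1) * r :=
          mul_le_mul_of_nonneg_right hK₁r hr0.le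
        rw [← hsplit] at h4
        have h5 : (A/2) * ((2*(C₁+A)/A) * r) = (C₁ + A) * r := by
          field_simp
        have h6 := mul_le_mul_of_nonneg_left h4 (by positivity : (0:ℝ) ≤ A/2)
        rw [h5] at h6
        linarith
      have hBr : B * r + A * (p * r) + A ≤ (C₁ + A) * r := by
        have hb1 : (C₁ + A) * r = B * r + A * (p * r) + A * r := by rw [hC₁def]; ring
        have hb2 : A ≤ A * r := le_mul_of_one_le_right hA.le h1r
        linarith
      have hexp : A * (r^p - 1 - p*r) = A * r^p - A - A * (p*r) := by ring
      have hhalf : A * r^p = (A/2) * r^p + (A/2) * r^p := by ring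
      nlinarith
    refine ⟨hWl, hWu, ?_, ?_⟩
    · -- lower bound on the ratio
      have hX : (A*(p-1)/4) * r ^ p ≤
          A * (p*r*(1+r)^(p-1) - (1+r)^p + 1) - W 0 := by
        have he : p*r*(1+r)^(p-1) - (1+r)^p + 1 = (1+r)^(p-1) * ((p-1)*r - 1) + 1 := by
          rw [show p = p - 1 + 1 by ring, Real.rpow_add_one (by linarith : (1:ℝ)+r ≠ 0)]
          ring_nf
        rw [he]
        have hg1 : (p-1)*r/2 ≤ (p-1)*r - 1 := by
          rw [div_le_iff₀ hp1] at h2r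
          nlinarith
        have hg2 : r ^ (p-1) ≤ (1+r)^(p-1) :=
          Real.rpow_le_rpow hr0.le (by linarith) hp1.le
        have hg3 : r^(p-1) * ((p-1)*r/2) ≤ (1+r)^(p-1) * ((p-1)*r - 1) := by
          apply mul_le_mul hg2 hg1 (by positivity) (by positivity)
        have hg4 : r^(p-1) * ((p-1)*r/2) = (p-1)/2 * r ^ p := by
          rw [hsplit]; ring
        have hg5 : W 0 ≤ (A*(p-1)/4) * r ^ p := by
          have h6 := mul_le_mul_of_nonneg_left hK₂r (by positivity : (0:ℝ) ≤ A*(p-1)/4)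
          have he2 : A*(p-1)/4 * (4*(W 0)/(A*(p-1))) = W 0 := by field_simp
          linarith [he2 ▸ h6]
        have hh1 := mul_le_mul_of_nonneg_left hg3 hA.le
        have hh2 : A * (r^(p-1) * ((p-1)*r/2)) = A*(p-1)/4 * r^p + A*(p-1)/4 * r^p := by
          rw [hsplit]; ring
        have hh3 : A * ((1+r)^(p-1) * ((p-1)*r - 1) + 1)
            = A * ((1+r)^(p-1) * ((p-1)*r - 1)) + A := by ring
        linarith
      have hfrac : (A*(p-1)/4)/C₂ ≤
          (A * (p*r*(1+r)^(p-1) - (1+r)^p + 1) - W 0) / W y := by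
        rw [div_le_div_iff₀ hC₂ hWypos]
        have hf1 := mul_le_mul_of_nonneg_left hWu (by positivity : (0:ℝ) ≤ A*(p-1)/4)
        have hf2 := mul_le_mul_of_nonneg_left hX hC₂.le
        have hf3 : A*(p-1)/4 * (C₂ * r^p) = C₂ * (A*(p-1)/4 * r^p) := by ring
        have hf4 : C₂ * (A * (p*r*(1+r)^(p-1) - (1+r)^p + 1) - W 0)
            = (A * (p*r*(1+r)^(p-1) - (1+r)^p + 1) - W 0) * C₂ := by ring
        linarith
      have hsum : 1 + (A * (p*r*(1+r)^(p-1) - (1+r)^p + 1) - W 0) / W y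
          ≤ ⟪gradient W y, y⟫ / W y := by
        have hrw : (W y + (A * (p*r*(1+r)^(p-1) - (1+r)^p + 1) - W 0)) / W y
            = 1 + (A * (p*r*(1+r)^(p-1) - (1+r)^p + 1) - W 0) / W y := by
          rw [add_div, div_self hWypos.ne']
        rw [← hrw]
        gcongr <;> linarith
      linarith
    · -- upper bound on the ratio
      have hCS : ⟪gradient W y, y⟫ ≤ B * (2:ℝ)^(p-1) * r^p := by
        have hcs1 := real_inner_le_norm (gradient W y) y
        have hcs2 := hWgrad y
        have hcs3 : Real.sqrt (1 + ‖y‖^2) ^ (p-1) ≤ (2:ℝ)^(p-1) * r^(p-1) :=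
          le_trans (Real.rpow_le_rpow (Real.sqrt_nonneg _) (aux_sqrt_le hr0.le) hp1.le)
            hbound12
        have hcs4 : ‖gradient W y‖ ≤ B * ((2:ℝ)^(p-1) * r^(p-1)) :=
          hcs2.trans (mul_le_mul_of_nonneg_left hcs3 hB.le)
        calc ⟪gradient W y, y⟫ ≤ ‖gradient W y‖ * r := hcs1
          _ ≤ B * ((2:ℝ)^(p-1) * r^(p-1)) * r :=
              mul_le_mul_of_nonneg_right hcs4 hr0.le
          _ = B * (2:ℝ)^(p-1) * r^p := by rw [hsplit]; ring
      rw [div_le_div_iff₀ hWypos (by positivity : (0:ℝ) < A/2)]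
      have hq1 := mul_le_mul_of_nonneg_left hWl
        (by positivity : (0:ℝ) ≤ B * (2:ℝ)^(p-1))
      have hq2 := mul_le_mul_of_nonneg_right hCS (by positivity : (0:ℝ) ≤ A/2)
      have hq3 : B * (2:ℝ)^(p-1) * r^p * (A/2) = B * (2:ℝ)^(p-1) * ((A/2) * r^p) := by ring
      linarith
  constructor
  · refine lt_of_lt_of_le (show (0:ℝ) < A/2 by positivity) (le_liminf_of_le ?_ ?_)
    · refine isCoboundedUnder_ge_of_eventually_le _ (x := C₂) (hev.mono fun y hy => ?_)
      have hr0 : (0:ℝ) < ‖y‖ := lt_of_lt_of_le (by linarith) hy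
      rw [div_le_iff₀ (Real.rpow_pos_of_pos hr0 p)]
      exact (key y hy).2.1
    · refine hev.mono fun y hy => ?_
      have hr0 : (0:ℝ) < ‖y‖ := lt_of_lt_of_le (by linarith) hy
      rw [le_div_iff₀ (Real.rpow_pos_of_pos hr0 p)]
      exact (key y hy).1
  · refine lt_of_lt_of_le (show (1:ℝ) < 1 + (A*(p-1)/4)/C₂ by
      have : (0:ℝ) < (A*(p-1)/4)/C₂ := by positivity
      linarith) (le_liminf_of_le ?_ ?_)
    · exact isCoboundedUnder_ge_of_eventually_le _ (x := B * (2:ℝ)^(p-1) / (A/2))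
        (hev.mono fun y hy => (key y hy).2.2.2)
    · exact hev.mono fun y hy => (key y hy).2.2.1
end

section
/- Let d ≥ 1, q > 1, Λ ≥ 0, c > 0, and let V : ℝ^d → ℝ be a positive function of class C² with D²V(x) ≤ Λ⟨x⟩^{q−2} Id and V(x) ≥ c⟨x⟩^q for all x ∈ ℝ^d. Then there exists a constant C > 0 such that for every z ∈ ℝ^d, every unit vector e ∈ S^{d−1}, and every α ∈ (0, 1]: (−1/V)(z+αe) + (−1/V)(z−αe) − 2(−1/V)(z) ≤ C α² ⟨z⟩^{−q−2}. -/
open scoped RealInnerProductSpace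

open InnerProductSpace in
private lemma grad_inner_eq {d : ℕ} (V : EuclideanSpace ℝ (Fin d) → ℝ)
    (x v : EuclideanSpace ℝ (Fin d)) : ⟪gradient V x, v⟫ = fderiv ℝ V x v :=
  toDual_symm_apply

private lemma aux_sqrt_compare {d : ℕ} (z e : EuclideanSpace ℝ (Fin d)) (he : ‖e‖ = 1)
    (t : ℝ) (ht : |t| ≤ 1) :
    Real.sqrt (1 + ‖z‖ ^ 2) ≤ Real.sqrt 3 * Real.sqrt (1 + ‖z + t • e‖ ^ 2) := by
  have hz : ‖z‖ ≤ ‖z + t • e‖ + 1 := by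
    have h0 : z = (z + t • e) - t • e := by abel
    calc ‖z‖ = ‖(z + t • e) - t • e‖ := by rw [← h0]
      _ ≤ ‖z + t • e‖ + ‖t • e‖ := norm_sub_le _ _
      _ ≤ ‖z + t • e‖ + 1 := by rw [norm_smul, he]; simpa using ht
  have h1 : 1 + ‖z‖ ^ 2 ≤ 3 * (1 + ‖z + t • e‖ ^ 2) := by
    nlinarith [norm_nonneg z, norm_nonneg (z + t • e), sq_nonneg (‖z + t • e‖ - 1)]
  calc Real.sqrt (1 + ‖z‖ ^ 2) ≤ Real.sqrt (3 * (1 + ‖z + t • e‖ ^ 2)) :=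
        Real.sqrt_le_sqrt h1
    _ = Real.sqrt 3 * Real.sqrt (1 + ‖z + t • e‖ ^ 2) := Real.sqrt_mul (by norm_num) _

private lemma aux_rpow_compare (q a b : ℝ) (hq : 1 < q) (ha : 0 < a) (hb : 0 < b)
    (hba : b ≤ Real.sqrt 3 * a) :
    a ^ (-q - 2) ≤ (3 : ℝ) ^ ((q + 2) / 2) * b ^ (-q - 2) := by
  have hp : (0 : ℝ) < q + 2 := by linarith
  have h3 : (Real.sqrt 3) ^ (q + 2) = (3 : ℝ) ^ ((q + 2) / 2) := by
    rw [Real.sqrt_eq_rpow, ← Real.rpow_mul (by norm_num : (0:ℝ) ≤ 3),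
      show 1 / 2 * (q + 2) = (q + 2) / 2 by ring]
  have key : b ^ (q + 2) ≤ (3 : ℝ) ^ ((q + 2) / 2) * a ^ (q + 2) := by
    calc b ^ (q + 2) ≤ (Real.sqrt 3 * a) ^ (q + 2) :=
          Real.rpow_le_rpow hb.le hba hp.le
      _ = (3 : ℝ) ^ ((q + 2) / 2) * a ^ (q + 2) := by
          rw [Real.mul_rpow (Real.sqrt_nonneg 3) ha.le, h3]
  have hneg : ∀ x : ℝ, 0 < x → x ^ (-q - 2) = 1 / x ^ (q + 2) := by
    intro x hx
    rw [show -q - 2 = -(q + 2) by ring, Real.rpow_neg hx.le, one_div]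
  rw [hneg a ha, hneg b hb, mul_one_div,
    div_le_div_iff₀ (Real.rpow_pos_of_pos ha _) (Real.rpow_pos_of_pos hb _), one_mul]
  exact key

set_option maxHeartbeats 1000000 in
/-- The second-order incremental ratio bound for `-1/V` from Section 3.4,
verifying the first asymptotic hypothesis (3.7) of Theorem 3.1. -/
theorem incremental_ratio_bound_neg_inv
    (d : ℕ) (hd : 1 ≤ d) (q Lam c : ℝ) (hq : 1 < q) (hLam : 0 ≤ Lam) (hc : 0 < c)
    (V : EuclideanSpace ℝ (Fin d) → ℝ)
    (hVpos : ∀ x, 0 < V x) (hV2 : ContDiff ℝ 2 V)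
    (hVhess : ∀ (x : EuclideanSpace ℝ (Fin d)) (v : EuclideanSpace ℝ (Fin d)),
      ⟪fderiv ℝ (fun y => gradient V y) x v, v⟫
        ≤ Lam * Real.sqrt (1 + ‖x‖ ^ 2) ^ (q - 2) * ‖v‖ ^ 2)
    (hVlb : ∀ x, c * Real.sqrt (1 + ‖x‖ ^ 2) ^ q ≤ V x) :
    ∃ C > 0, ∀ (z : EuclideanSpace ℝ (Fin d)) (e : EuclideanSpace ℝ (Fin d)),
      ‖e‖ = 1 → ∀ α : ℝ, 0 < α → α ≤ 1 →
        (-1 / V (z + α • e)) + (-1 / V (z - α • e)) - 2 * (-1 / V z)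
          ≤ C * α ^ 2 * Real.sqrt (1 + ‖z‖ ^ 2) ^ (-q - 2) := by
  have hVdiff : Differentiable ℝ V := hV2.differentiable (by norm_num)
  have hGcd : ContDiff ℝ 1 (fun y => gradient V y) := by
    have hfd : ContDiff ℝ 1 (fderiv ℝ V) := hV2.fderiv_right (by norm_num)
    exact ((InnerProductSpace.toDual ℝ
      (EuclideanSpace ℝ (Fin d))).symm.contDiff).comp hfd
  have hGdiff : Differentiable ℝ (fun y => gradient V y) := hGcd.differentiable (by norm_num)
  set C : ℝ := (3 : ℝ) ^ ((q + 2) / 2) * (Lam + 1) / c ^ 2 with hCdef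
  have hCpos : 0 < C := by positivity
  refine ⟨C, hCpos, ?_⟩
  intro z e he α hα hα1
  set K : ℝ := C * Real.sqrt (1 + ‖z‖ ^ 2) ^ (-q - 2) with hKdef
  have hcurve : ∀ t : ℝ, HasDerivAt (fun s : ℝ => z + s • e) e t := by
    intro t
    simpa using ((hasDerivAt_id t).smul_const e).const_add z
  set W1 : ℝ → ℝ := fun t => ⟪gradient V (z + t • e), e⟫ with hW1def
  set W2 : ℝ → ℝ := fun t =>
    ⟪fderiv ℝ (fun y => gradient V y) (z + t • e) e, e⟫ with hW2def
  have hW : ∀ t : ℝ, HasDerivAt (fun s => V (z + s • e)) (W1 t) t := by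
    intro t
    have h0 := (hVdiff (z + t • e)).hasFDerivAt.comp_hasDerivAt t (hcurve t)
    simp only [hW1def, grad_inner_eq]
    exact h0
  have hW1d : ∀ t : ℝ, HasDerivAt W1 (W2 t) t := by
    intro t
    have hg : HasDerivAt (fun s : ℝ => gradient V (z + s • e))
        (fderiv ℝ (fun y => gradient V y) (z + t • e) e) t :=
      by have h := (hGdiff (z + t • e)).hasFDerivAt.comp_hasDerivAt t (hcurve t); exact h
    have hcomp := (innerSL ℝ e).hasFDerivAt.comp_hasDerivAt t hg
    have heq : W1 = fun s : ℝ => (innerSL ℝ e) (gradient V (z + s • e)) := by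
      funext s
      simp only [hW1def, innerSL_apply_apply]
      exact real_inner_comm _ _
    have heq2 : W2 t = (innerSL ℝ e)
        (fderiv ℝ (fun y => gradient V y) (z + t • e) e) := by
      simp only [hW2def, innerSL_apply_apply]
      exact real_inner_comm _ _
    rw [heq, heq2]
    exact hcomp
  set h : ℝ → ℝ := fun t => -1 / V (z + t • e) with hhdef
  set h1 : ℝ → ℝ := fun t => W1 t / V (z + t • e) ^ 2 with hh1def
  set h2 : ℝ → ℝ := fun t =>
    (W2 t * V (z + t • e) ^ 2 - W1 t * (2 * V (z + t • e) ^ 1 * W1 t))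
      / (V (z + t • e) ^ 2) ^ 2 with hh2def
  have hhd : ∀ t : ℝ, HasDerivAt h (h1 t) t := by
    intro t
    have h0 := ((hW t).inv (ne_of_gt (hVpos _))).neg
    have heq : h = fun s => -(V (z + s • e))⁻¹ := by
      funext s
      simp only [hhdef]
      rw [neg_div, one_div]
    rw [heq]
    simp only [hh1def]
    convert h0 using 1
    iterate 3 rfl
    rw [neg_div, neg_neg]
  have hh1d : ∀ t : ℝ, HasDerivAt h1 (h2 t) t := by
    intro t
    have h0 := (hW1d t).div ((hW t).pow 2) (pow_ne_zero 2 (ne_of_gt (hVpos _)))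
    simp only [hh1def, hh2def]
    convert h0 using 2
    all_goals rfl
    all_goals push_cast; try norm_num
    all_goals try ring
  have hbound : ∀ t : ℝ, |t| ≤ 1 → h2 t ≤ K := by
    intro t ht
    set a : ℝ := Real.sqrt (1 + ‖z + t • e‖ ^ 2) with hadef
    have ha : 0 < a := Real.sqrt_pos.mpr (by positivity)
    have hWpos : 0 < V (z + t • e) := hVpos _
    have hW2le : W2 t ≤ Lam * a ^ (q - 2) := by
      have h0 := hVhess (z + t • e) e
      rw [he, one_pow, mul_one] at h0
      exact h0
    have hVlbx : c * a ^ q ≤ V (z + t • e) := hVlb _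
    have hb : 0 < Real.sqrt (1 + ‖z‖ ^ 2) := Real.sqrt_pos.mpr (by positivity)
    have hcmp : a ^ (-q - 2) ≤ (3 : ℝ) ^ ((q + 2) / 2)
        * Real.sqrt (1 + ‖z‖ ^ 2) ^ (-q - 2) :=
      aux_rpow_compare q a _ hq ha hb (aux_sqrt_compare z e he t ht)
    have hcaq : 0 < c * a ^ q := mul_pos hc (Real.rpow_pos_of_pos ha q)
    have hnum : 0 ≤ Lam * a ^ (q - 2) :=
      mul_nonneg hLam (Real.rpow_nonneg ha.le _)
    have step1 : h2 t ≤ W2 t / V (z + t • e) ^ 2 := by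
      simp only [hh2def]
      have hnn : 0 ≤ W1 t * (2 * V (z + t • e) ^ 1 * W1 t) := by
        have : W1 t * (2 * V (z + t • e) ^ 1 * W1 t)
            = 2 * V (z + t • e) * W1 t ^ 2 := by ring
        rw [this]
        have := sq_nonneg (W1 t)
        nlinarith
      have hE : (0:ℝ) < (V (z + t • e) ^ 2) ^ 2 := pow_pos (pow_pos hWpos 2) 2
      have hstep : (W2 t * V (z + t • e) ^ 2 - W1 t * (2 * V (z + t • e) ^ 1 * W1 t))
            / (V (z + t • e) ^ 2) ^ 2
          ≤ W2 t * V (z + t • e) ^ 2 / (V (z + t • e) ^ 2) ^ 2 :=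
        (div_le_div_iff_of_pos_right hE).mpr (by linarith)
      refine hstep.trans (le_of_eq ?_)
      have hVne : V (z + t • e) ≠ 0 := ne_of_gt hWpos
      field_simp
    have step2 : W2 t / V (z + t • e) ^ 2 ≤ Lam * a ^ (q - 2) / V (z + t • e) ^ 2 :=
      (div_le_div_iff_of_pos_right (pow_pos hWpos 2)).mpr hW2le
    have step3 : Lam * a ^ (q - 2) / V (z + t • e) ^ 2
        ≤ Lam * a ^ (q - 2) / (c * a ^ q) ^ 2 :=
      div_le_div_of_nonneg_left hnum (pow_pos hcaq 2)
        (pow_le_pow_left₀ hcaq.le hVlbx 2)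
    have step4 : Lam * a ^ (q - 2) / (c * a ^ q) ^ 2 = Lam / c ^ 2 * a ^ (-q - 2) := by
      have h2q : (a ^ q) ^ 2 = a ^ (2 * q) := by
        rw [sq, ← Real.rpow_add ha]; ring_nf
      have hsub : a ^ (-q - 2) = a ^ (q - 2) / a ^ (2 * q) := by
        rw [← Real.rpow_sub ha]; ring_nf
      rw [mul_pow, h2q, hsub]
      have ha2q : a ^ (2 * q) ≠ 0 := ne_of_gt (Real.rpow_pos_of_pos ha _)
      field_simp
      try ring
    have step5 : Lam / c ^ 2 * a ^ (-q - 2) ≤ K := by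
      rw [hKdef, hCdef]
      calc Lam / c ^ 2 * a ^ (-q - 2)
          ≤ Lam / c ^ 2 * ((3 : ℝ) ^ ((q + 2) / 2)
            * Real.sqrt (1 + ‖z‖ ^ 2) ^ (-q - 2)) := by
            apply mul_le_mul_of_nonneg_left hcmp
            positivity
        _ = (3 : ℝ) ^ ((q + 2) / 2) * Lam / c ^ 2
            * Real.sqrt (1 + ‖z‖ ^ 2) ^ (-q - 2) := by ring
        _ ≤ (3 : ℝ) ^ ((q + 2) / 2) * (Lam + 1) / c ^ 2
            * Real.sqrt (1 + ‖z‖ ^ 2) ^ (-q - 2) := by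
            have h3p : (0:ℝ) < (3 : ℝ) ^ ((q + 2) / 2) :=
              Real.rpow_pos_of_pos (by norm_num) _
            have hzp : (0:ℝ) ≤ Real.sqrt (1 + ‖z‖ ^ 2) ^ (-q - 2) :=
              Real.rpow_nonneg hb.le _
            have hc2 : (0:ℝ) < c ^ 2 := pow_pos hc 2
            apply mul_le_mul_of_nonneg_right _ hzp
            apply (div_le_div_iff_of_pos_right hc2).mpr
            exact mul_le_mul_of_nonneg_left (by linarith) h3p.le
    calc h2 t ≤ W2 t / V (z + t • e) ^ 2 := step1
      _ ≤ Lam * a ^ (q - 2) / V (z + t • e) ^ 2 := step2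
      _ ≤ Lam * a ^ (q - 2) / (c * a ^ q) ^ 2 := step3
      _ = Lam / c ^ 2 * a ^ (-q - 2) := step4
      _ ≤ K := step5
  set φ : ℝ → ℝ := fun t => K / 2 * t ^ 2 - h t with hφdef
  set φ1 : ℝ → ℝ := fun t => K * t - h1 t with hφ1def
  have hφd : ∀ t : ℝ, HasDerivAt φ (φ1 t) t := by
    intro t
    have h0 := ((hasDerivAt_pow 2 t).const_mul (K / 2)).sub (hhd t)
    simp only [hφdef, hφ1def]
    convert h0 using 1
    iterate 3 rfl
    push_cast
    ring
  have hφ1d : ∀ t : ℝ, HasDerivAt φ1 (K - h2 t) t := by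
    intro t
    have h0 := ((hasDerivAt_id t).const_mul K).sub (hh1d t)
    simp only [hφ1def]
    convert h0 using 1
    iterate 3 rfl
    simpa using h0
  have hconv : ConvexOn ℝ (Set.Icc (-α) α) φ := by
    apply convexOn_of_hasDerivWithinAt2_nonneg (f' := φ1) (f'' := fun t => K - h2 t)
      (convex_Icc _ _)
    · exact (Differentiable.continuous fun t => (hφd t).differentiableAt).continuousOn
    · exact fun t _ => (hφd t).hasDerivWithinAt
    · exact fun t _ => (hφ1d t).hasDerivWithinAt
    · intro t htmem
      rw [interior_Icc] at htmem
      have ht1 : |t| ≤ 1 := by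
        rw [abs_le]
        exact ⟨by linarith [htmem.1], by linarith [htmem.2]⟩
      have := hbound t ht1
      simp only [sub_nonneg]
      linarith
  have hmem1 : -α ∈ Set.Icc (-α) α := by constructor <;> linarith
  have hmem2 : α ∈ Set.Icc (-α) α := by constructor <;> linarith
  have hkey := hconv.2 hmem1 hmem2 (by norm_num : (0:ℝ) ≤ 1/2)
    (by norm_num : (0:ℝ) ≤ 1/2) (by norm_num)
  have hpt : (1/2 : ℝ) • (-α) + (1/2 : ℝ) • α = 0 := by
    simp only [smul_eq_mul]; ring
  rw [hpt] at hkey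
  simp only [smul_eq_mul] at hkey
  have hφ0 : φ 0 = -(-1 / V z) := by
    simp [hφdef, hhdef]
  have hφa : φ α = K / 2 * α ^ 2 - (-1 / V (z + α • e)) := by
    simp only [hφdef, hhdef]
  have hφna : φ (-α) = K / 2 * α ^ 2 - (-1 / V (z - α • e)) := by
    have hzz : z + (-α) • e = z - α • e := by
      rw [neg_smul, ← sub_eq_add_neg]
    simp only [hφdef, hhdef, hzz]
    ring
  rw [hφ0, hφa, hφna] at hkey
  have hKα : K * α ^ 2 = C * α ^ 2 * Real.sqrt (1 + ‖z‖ ^ 2) ^ (-q - 2) := by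
    rw [hKdef]; ring
  linarith [hkey, hKα.ge, hKα.le]
end
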